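/- arXiv:1210.0959 — 2 statements merged into one kernel-verified Lean document; each statement's English description precedes it below -/
import Mathlib

section
/- Let ϑ ∈ I, let ζ be the unique fluid model solution with initial measure ϑ, and let w be the unique workload fluid model solution with w(0) = w_ϑ. Then w_{ζ(t)} = w(t) for all t ≥ 0, where w_{ζ(t)} = sup{x ≥ 0 : ζ_+(t)([x,∞)×[0,∞)) > 0}. -/
open MeasureTheory Set Filter Topology
open scoped ENNReal

noncomputable section

namespace OverloadedFIFO

/-- The complement `G(x) = Γ((x, ∞))` of the cumulative distribution function of `Γ`. -/
def Gk (Γ : MeasureTheory.Measure ℝ) (x : ℝ) : ℝ := (Γ (Set.Ioi x)).toReal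

/-- Model data: `K` job classes with arrival rates `lam`, service rates `mu`, and
deadline (patience) distributions `Γ`, in the overloaded regime `ρ > 1`.  Each `Γ k` is a
Borel probability measure on `[0,∞)` (no mass on negatives), with continuous c.d.f.
(no atoms, in particular `Γ k {0} = 0`) and finite mean. -/
structure Data (K : ℕ) where
  lam : Fin K → ℝ
  mu : Fin K → ℝ
  Γ : Fin K → MeasureTheory.Measure ℝ
  lam_pos : ∀ k, 0 < lam k
  mu_pos : ∀ k, 0 < mu k
  Γ_prob : ∀ k, MeasureTheory.IsProbabilityMeasure (Γ k)
  Γ_null_neg : ∀ k, Γ k (Set.Iio 0) = 0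
  Γ_noAtom : ∀ k, ∀ x : ℝ, Γ k {x} = 0
  Γ_finite_mean : ∀ k, MeasureTheory.Integrable id (Γ k)
  rho_gt_one : 1 < ∑ k, lam k / mu k

instance {K : ℕ} (D : Data K) (k : Fin K) : IsProbabilityMeasure (D.Γ k) := D.Γ_prob k

/-- `ρ_k = λ_k / μ_k`. -/
def Data.rho {K : ℕ} (D : Data K) (k : Fin K) : ℝ := D.lam k / D.mu k

/-- `ρ = Σ_k ρ_k`. -/
def Data.rhoTot {K : ℕ} (D : Data K) : ℝ := ∑ k, D.rho k

/-- A workload fluid model solution: a nonnegative function `w` on `[0,∞)` satisfying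
`w(t) = w(0) + Σ_k ρ_k ∫_0^t G_k(w(s)) ds − t` for all `t ≥ 0`. -/
def IsWorkloadSol {K : ℕ} (D : Data K) (w : ℝ → ℝ) : Prop :=
  (∀ t : ℝ, 0 ≤ t → 0 ≤ w t) ∧
  (∀ k : Fin K, ∀ t : ℝ, 0 ≤ t →
    IntervalIntegrable (fun s => Gk (D.Γ k) (w s)) volume 0 t) ∧
  (∀ t : ℝ, 0 ≤ t →
    w t = w 0 + (∑ k, D.rho k * ∫ s in (0:ℝ)..t, Gk (D.Γ k) (w s)) - t)

/-- `w_l = sup {u ≥ 0 : Σ_k ρ_k G_k(u) > 1}`. -/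
def wl {K : ℕ} (D : Data K) : ℝ :=
  sSup {u : ℝ | 0 ≤ u ∧ 1 < ∑ k, D.rho k * Gk (D.Γ k) u}

/-- `w_u = sup {u ≥ 0 : Σ_k ρ_k G_k(u) ≥ 1}`. -/
def wu {K : ℕ} (D : Data K) : ℝ :=
  sSup {u : ℝ | 0 ≤ u ∧ 1 ≤ ∑ k, D.rho k * Gk (D.Γ k) u}

/-- `d_max = max_k sup {x ≥ 0 : G_k(x) > 0} ∈ (0,∞]`, as an extended nonnegative real. -/
def dmax {K : ℕ} (D : Data K) : ℝ≥0∞ :=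
  ⨆ k, sSup (ENNReal.ofReal '' {x : ℝ | 0 ≤ x ∧ 0 < Gk (D.Γ k) x})

/-- `τ(t) = inf {s ∈ [0,t] : w(s) + s ≥ t}`. -/
def tauF (w : ℝ → ℝ) (t : ℝ) : ℝ := sInf {s : ℝ | 0 ≤ s ∧ s ≤ t ∧ t ≤ w s + s}

/-- The nonnegative quadrant `[0,∞)²`. -/
def Q : Set (ℝ × ℝ) := {p | 0 ≤ p.1 ∧ 0 ≤ p.2}

/-- The shift `B_x = {y ∈ [0,∞)² : y − x ∈ B}` of a set `B ⊆ [0,∞)²`. -/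
def shift (B : Set (ℝ × ℝ)) (x : ℝ × ℝ) : Set (ℝ × ℝ) :=
  {y | y ∈ Q ∧ (y.1 - x.1, y.2 - x.2) ∈ B}

/-- Diagonal shift `B_t = B_{(t,t)}`. -/
def shiftd (B : Set (ℝ × ℝ)) (t : ℝ) : Set (ℝ × ℝ) := shift B (t, t)

/-- The set `C = ([0,∞)×{0}) ∪ ({0}×[0,∞))`. -/
def Cset : Set (ℝ × ℝ) := {p | (0 ≤ p.1 ∧ p.2 = 0) ∨ (p.1 = 0 ∧ 0 ≤ p.2)}

/-- The `κ`-enlargement `B^κ = {x ∈ [0,∞)² : inf_{y ∈ B} ‖x−y‖ < κ}` (Euclidean norm). -/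
def enlarge (B : Set (ℝ × ℝ)) (κ : ℝ) : Set (ℝ × ℝ) :=
  {x | x ∈ Q ∧ ∃ y ∈ B, Real.sqrt ((x.1 - y.1) ^ 2 + (x.2 - y.2) ^ 2) < κ}

/-- `w_ϑ = sup {x ≥ 0 : ϑ_+([x,∞)×[0,∞)) > 0}` for a `K`-tuple `ϑ` of measures on `[0,∞)²`. -/
def wMeas {K : ℕ} (ϑ : Fin K → MeasureTheory.Measure (ℝ × ℝ)) : ℝ :=
  sSup {x : ℝ | 0 ≤ x ∧ 0 < ∑ k, ϑ k (Set.Ici x ×ˢ Set.Ici (0:ℝ))}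

/-- Membership in the set `I` of admissible initial measures: each `ϑ k` is a finite Borel
measure on `[0,∞)²`; (I.1) the superposition charges no corner set `C_x`, `x ∈ [0,∞)²`;
(I.2) `w_ϑ < ∞`; (I.3) `max_k G_k(w_ϑ − ε) > 0` for every `ε > 0`. -/
def MemI {K : ℕ} (D : Data K) (ϑ : Fin K → MeasureTheory.Measure (ℝ × ℝ)) : Prop :=
  (∀ k, IsFiniteMeasure (ϑ k)) ∧
  (∀ k, ϑ k Qᶜ = 0) ∧
  (∀ x ∈ Q, (∑ k, ϑ k (shift Cset x)) = 0) ∧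
  BddAbove {x : ℝ | 0 ≤ x ∧ 0 < ∑ k, ϑ k (Set.Ici x ×ˢ Set.Ici (0:ℝ))} ∧
  (∀ ε : ℝ, 0 < ε → ∃ k, 0 < Gk (D.Γ k) (wMeas ϑ - ε))

/-- `δ⁺_w`: the Dirac measure at `w` if `w > 0`, and the zero measure otherwise. -/
def deltaPlus (w : ℝ) : MeasureTheory.Measure ℝ :=
  if 0 < w then MeasureTheory.Measure.dirac w else 0

instance (w : ℝ) : SFinite (deltaPlus w) := by
  unfold deltaPlus; split_ifs <;> infer_instance

/-- `(δ⁺_w × Γ)(B)`, as a real number. -/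
def kern (Γ : MeasureTheory.Measure ℝ) (w : ℝ) (B : Set (ℝ × ℝ)) : ℝ :=
  (((deltaPlus w).prod Γ) B).toReal

/-- A (measure-valued) fluid model solution with initial measure `ϑ`: a family
`ζ(t) = (ζ_1(t),…,ζ_K(t))` of finite Borel measures on `[0,∞)²` with `ζ(0) = ϑ` satisfying
`ζ_k(t)(B) = ϑ_k(B_t) + λ_k ∫_0^t (δ⁺_{w(s)} × Γ_k)(B_{t−s}) ds` for every Borel
`B ⊆ [0,∞)²` and `t ≥ 0`, where `w` is the (unique) workload fluid model solution with
`w(0) = w_ϑ`. -/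
def IsFluidSol {K : ℕ} (D : Data K) (ϑ : Fin K → MeasureTheory.Measure (ℝ × ℝ))
    (ζ : ℝ → Fin K → MeasureTheory.Measure (ℝ × ℝ)) : Prop :=
  ∃ w : ℝ → ℝ, IsWorkloadSol D w ∧ w 0 = wMeas ϑ ∧
    (∀ t : ℝ, 0 ≤ t → ∀ k, IsFiniteMeasure (ζ t k) ∧ ζ t k Qᶜ = 0) ∧
    (∀ k, ζ 0 k = ϑ k) ∧
    (∀ k, ∀ B : Set (ℝ × ℝ), B ⊆ Q → MeasurableSet B → ∀ t : ℝ, 0 ≤ t →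
      IntervalIntegrable (fun s => kern (D.Γ k) (w s) (shiftd B (t - s))) volume 0 t ∧
      ζ t k B = ϑ k (shiftd B t) +
        ENNReal.ofReal (D.lam k * ∫ s in (0:ℝ)..t, kern (D.Γ k) (w s) (shiftd B (t - s))))

/-- The candidate invariant state `θ^w`:
`θ^w_k(B) = λ_k ∫_0^w Γ_k({p ≥ u : (w−u, p−u) ∈ B}) du`. -/
def thetaW {K : ℕ} (D : Data K) (w : ℝ) (k : Fin K) : MeasureTheory.Measure (ℝ × ℝ) :=
  ENNReal.ofReal (D.lam k) •
    MeasureTheory.Measure.map (fun up : ℝ × ℝ => (w - up.1, up.2 - up.1))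
      ((((MeasureTheory.volume.restrict (Set.Ioo (0:ℝ) w))).prod (D.Γ k)).restrict
        {up : ℝ × ℝ | up.1 ≤ up.2})

section Aux

variable {K : ℕ}

lemma rho_nonneg (D : Data K) (k : Fin K) : 0 ≤ D.rho k :=
  le_of_lt (div_pos (D.lam_pos k) (D.mu_pos k))

lemma Gk_nonneg (Γ : MeasureTheory.Measure ℝ) (x : ℝ) : 0 ≤ Gk Γ x :=
  ENNReal.toReal_nonneg

lemma Gk_anti (D : Data K) (k : Fin K) : Antitone (Gk (D.Γ k)) := fun x y hxy =>
  ENNReal.toReal_mono (measure_ne_top _ _) (measure_mono (Set.Ioi_subset_Ioi hxy))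

/-- The primitive `t ↦ ∫_0^t G_k(w s) ds` grows: `∫_0^s ≤ ∫_0^t` for `0 ≤ s ≤ t`. -/
lemma primitive_mono {D : Data K} {w : ℝ → ℝ} (hw : IsWorkloadSol D w) (k : Fin K)
    {s t : ℝ} (hs : 0 ≤ s) (hst : s ≤ t) :
    (∫ u in (0:ℝ)..s, Gk (D.Γ k) (w u)) ≤ ∫ u in (0:ℝ)..t, Gk (D.Γ k) (w u) := by
  have ht : 0 ≤ t := hs.trans hst
  have hi0t := hw.2.1 k t ht
  have hi0s := hw.2.1 k s hs
  have hist : IntervalIntegrable (fun u => Gk (D.Γ k) (w u)) volume s t := by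
    apply hi0t.mono_set
    rw [uIcc_of_le hst, uIcc_of_le ht]
    exact Icc_subset_Icc hs le_rfl
  have hadd := intervalIntegral.integral_add_adjacent_intervals hi0s hist
  have hnn : 0 ≤ ∫ u in s..t, Gk (D.Γ k) (w u) :=
    intervalIntegral.integral_nonneg hst (fun u _ => Gk_nonneg _ _)
  linarith

lemma workload_addmono {D : Data K} {w : ℝ → ℝ} (hw : IsWorkloadSol D w)
    {s t : ℝ} (hs : 0 ≤ s) (hst : s ≤ t) : w s + s ≤ w t + t := by
  have ht : 0 ≤ t := hs.trans hst
  rw [hw.2.2 s hs, hw.2.2 t ht]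
  have hsum : (∑ k, D.rho k * ∫ u in (0:ℝ)..s, Gk (D.Γ k) (w u)) ≤
      ∑ k, D.rho k * ∫ u in (0:ℝ)..t, Gk (D.Γ k) (w u) :=
    Finset.sum_le_sum fun k _ =>
      mul_le_mul_of_nonneg_left (primitive_mono hw k hs hst) (rho_nonneg D k)
  linarith

lemma workload_continuousOn {D : Data K} {w : ℝ → ℝ} (hw : IsWorkloadSol D w)
    {T : ℝ} (hT : 0 ≤ T) : ContinuousOn w (Icc 0 T) := by
  have hc : ContinuousOn
      (fun t => w 0 + (∑ k, D.rho k * ∫ s in (0:ℝ)..t, Gk (D.Γ k) (w s)) - t)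
      (Icc 0 T) := by
    apply ContinuousOn.sub _ continuousOn_id
    apply ContinuousOn.add continuousOn_const
    apply continuousOn_finset_sum
    intro k _
    apply ContinuousOn.mul continuousOn_const
    have h := hw.2.1 k T hT
    have := intervalIntegral.continuousOn_primitive_interval'
      (μ := volume) (f := fun s => Gk (D.Γ k) (w s)) (b₁ := 0) (b₂ := T) (a := 0)
      h left_mem_uIcc
    rwa [uIcc_of_le hT] at this
  exact hc.congr fun t ht => hw.2.2 t ht.1

/-- Uniqueness, one-sided: two workload solutions with the same initial value agree. -/
lemma workload_le {D : Data K} {u v : ℝ → ℝ} (hu : IsWorkloadSol D u)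
    (hv : IsWorkloadSol D v) (h0 : u 0 = v 0) {t : ℝ} (ht : 0 ≤ t) : u t ≤ v t := by
  by_contra hlt
  push_neg at hlt
  have ht0 : 0 < t := by
    rcases ht.lt_or_eq with h | h
    · exact h
    · exact absurd (h ▸ h0.le : u t ≤ v t) (not_le.mpr hlt)
  set d : ℝ → ℝ := fun s => u s - v s with hd
  have hdc : ContinuousOn d (Icc 0 t) :=
    (workload_continuousOn hu ht).sub (workload_continuousOn hv ht)
  set A := {s : ℝ | s ∈ Icc (0:ℝ) t ∧ d s ≤ 0} with hA
  have hA0 : (0:ℝ) ∈ A := ⟨⟨le_rfl, ht⟩, by simp [hd, h0]⟩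
  have hAne : A.Nonempty := ⟨0, hA0⟩
  have hAb : BddAbove A := ⟨t, fun s hs => hs.1.2⟩
  have hAclosed : IsClosed A := by
    have := hdc.preimage_isClosed_of_isClosed isClosed_Icc (isClosed_Iic (a := (0:ℝ)))
    simpa [hA, Set.preimage, Set.inter_def] using this
  set a := sSup A with ha
  have haA : a ∈ A := hAclosed.csSup_mem hAne hAb
  have ha0 : 0 ≤ a := haA.1.1
  have hat : a ≤ t := haA.1.2
  have hdt : 0 < d t := sub_pos.mpr hlt
  have haltt : a < t := by
    rcases hat.lt_or_eq with h | h
    · exact h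
    · exact absurd (h ▸ haA.2) (not_le.mpr hdt)
  have hpos : ∀ s, a < s → s ≤ t → 0 < d s := by
    intro s hs1 hs2
    by_contra hns
    push_neg at hns
    have : s ∈ A := ⟨⟨ha0.trans hs1.le, hs2⟩, hns⟩
    exact absurd (le_csSup hAb this) (not_le.mpr hs1)
  -- d a = 0
  have hda_le : d a ≤ 0 := haA.2
  have hda_ge : 0 ≤ d a := by
    have htend : Filter.Tendsto d (nhdsWithin a (Ioc a t)) (nhds (d a)) := by
      have h1 : Filter.Tendsto d (nhdsWithin a (Icc 0 t)) (nhds (d a)) :=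
        hdc a haA.1
      exact h1.mono_left (nhdsWithin_mono a (fun s hs => ⟨ha0.trans hs.1.le, hs.2⟩))
    have hne : (nhdsWithin a (Ioc a t)).NeBot := by
      rw [nhdsWithin_Ioc_eq_nhdsGT haltt]
      infer_instance
    refine ge_of_tendsto htend ?_
    filter_upwards [self_mem_nhdsWithin] with s hs
    exact (hpos s hs.1 hs.2).le
  have hda : d a = 0 := le_antisymm hda_le hda_ge
  -- integral comparison on [a, t]
  have hint : ∀ (f : ℝ → ℝ), (∀ T, 0 ≤ T → IntervalIntegrable f volume 0 T) →
      IntervalIntegrable f volume a t := by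
    intro f hf
    apply (hf t ht).mono_set
    rw [uIcc_of_le hat, uIcc_of_le ht]
    exact Icc_subset_Icc ha0 le_rfl
  have hkey : ∀ k : Fin K,
      (∫ s in a..t, Gk (D.Γ k) (u s)) ≤ ∫ s in a..t, Gk (D.Γ k) (v s) := by
    intro k
    apply intervalIntegral.integral_mono_on hat
      (hint _ (fun T hT => hu.2.1 k T hT)) (hint _ (fun T hT => hv.2.1 k T hT))
    intro s hs
    rcases hs.1.lt_or_eq with h | h
    · exact Gk_anti D k (le_of_lt (sub_pos.mp (hpos s h hs.2)))
    · have : u s = v s := by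
        have := hda
        simp only [hd] at this
        rw [← h] at *
        linarith
      rw [this]
  -- assemble
  have hsplit : ∀ k (y : ℝ → ℝ), IsWorkloadSol D y →
      (∫ s in (0:ℝ)..t, Gk (D.Γ k) (y s)) =
        (∫ s in (0:ℝ)..a, Gk (D.Γ k) (y s)) + ∫ s in a..t, Gk (D.Γ k) (y s) := by
    intro k y hy
    exact (intervalIntegral.integral_add_adjacent_intervals (hy.2.1 k a ha0)
      (hint _ (fun T hT => hy.2.1 k T hT))).symm
  have hut := hu.2.2 t ht
  have hvt := hv.2.2 t ht
  have hua := hu.2.2 a ha0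
  have hva := hv.2.2 a ha0
  have hdteq : d t = d a + ∑ k, D.rho k *
      ((∫ s in a..t, Gk (D.Γ k) (u s)) - ∫ s in a..t, Gk (D.Γ k) (v s)) := by
    simp only [hd]
    rw [hut, hvt, hua, hva, h0]
    have h1 : ∀ k : Fin K, (∫ s in (0:ℝ)..t, Gk (D.Γ k) (u s)) =
        (∫ s in (0:ℝ)..a, Gk (D.Γ k) (u s)) + ∫ s in a..t, Gk (D.Γ k) (u s) :=
      fun k => hsplit k u hu
    have h2 : ∀ k : Fin K, (∫ s in (0:ℝ)..t, Gk (D.Γ k) (v s)) =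
        (∫ s in (0:ℝ)..a, Gk (D.Γ k) (v s)) + ∫ s in a..t, Gk (D.Γ k) (v s) :=
      fun k => hsplit k v hv
    simp only [fun k => h1 k, fun k => h2 k, mul_add, mul_sub, Finset.sum_add_distrib,
      Finset.sum_sub_distrib]
    ring
  have hsum_nonpos : (∑ k, D.rho k *
      ((∫ s in a..t, Gk (D.Γ k) (u s)) - ∫ s in a..t, Gk (D.Γ k) (v s))) ≤ 0 := by
    apply Finset.sum_nonpos
    intro k _
    exact mul_nonpos_of_nonneg_of_nonpos (rho_nonneg D k) (sub_nonpos.mpr (hkey k))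
  rw [hdteq, hda] at hdt
  linarith

lemma workload_unique {D : Data K} {u v : ℝ → ℝ} (hu : IsWorkloadSol D u)
    (hv : IsWorkloadSol D v) (h0 : u 0 = v 0) {t : ℝ} (ht : 0 ≤ t) : u t = v t :=
  le_antisymm (workload_le hu hv h0 ht) (workload_le hv hu h0.symm ht)

end Aux
section Aux2

variable {K : ℕ}

lemma kern_rect (Γ : MeasureTheory.Measure ℝ) [SFinite Γ] (v a b : ℝ) :
    kern Γ v (Set.Ici a ×ˢ Set.Ici b) =
      if 0 < v ∧ a ≤ v then (Γ (Set.Ici b)).toReal else 0 := by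
  unfold kern deltaPlus
  by_cases hv : 0 < v
  · rw [if_pos hv, Measure.prod_prod, Measure.dirac_apply' _ measurableSet_Ici]
    by_cases hav : a ≤ v
    · rw [if_pos ⟨hv, hav⟩]
      simp [Set.indicator_of_mem (Set.mem_Ici.mpr hav)]
    · rw [if_neg (fun h => hav h.2)]
      simp [Set.indicator_of_notMem (fun h => hav (Set.mem_Ici.mp h))]
  · rw [if_neg hv, if_neg (fun h => hv h.1)]
    simp [Measure.prod_prod]

lemma shiftd_rect {x c : ℝ} (hx : 0 ≤ x) (hc : 0 ≤ c) :
    shiftd (Set.Ici x ×ˢ Set.Ici (0:ℝ)) c = Set.Ici (x + c) ×ˢ Set.Ici c := by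
  ext p
  simp only [shiftd, shift, Q, Set.mem_setOf_eq, Set.mem_prod, Set.mem_Ici]
  constructor
  · rintro ⟨⟨h1, h2⟩, h3, h4⟩
    exact ⟨by linarith, by linarith⟩
  · rintro ⟨h1, h2⟩
    exact ⟨⟨by linarith, by linarith⟩, by linarith, by linarith⟩

lemma rect_subset_Q {x : ℝ} (hx : 0 ≤ x) : (Set.Ici x ×ˢ Set.Ici (0:ℝ)) ⊆ Q := by
  rintro p ⟨h1, h2⟩
  exact ⟨hx.trans h1, h2⟩

/-- If `y ≥ 0` exceeds `wMeas ϑ`, the total mass beyond `y` vanishes. -/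
lemma sum_measure_zero_of_gt {ϑ : Fin K → MeasureTheory.Measure (ℝ × ℝ)}
    (hb : BddAbove {x : ℝ | 0 ≤ x ∧ 0 < ∑ k, ϑ k (Set.Ici x ×ˢ Set.Ici (0:ℝ))})
    {y : ℝ} (hy : 0 ≤ y) (h : wMeas ϑ < y) :
    (∑ k, ϑ k (Set.Ici y ×ˢ Set.Ici (0:ℝ))) = 0 := by
  by_contra hne
  have hpos : 0 < ∑ k, ϑ k (Set.Ici y ×ˢ Set.Ici (0:ℝ)) := pos_iff_ne_zero.mpr hne
  have : y ≤ wMeas ϑ := le_csSup hb ⟨hy, hpos⟩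
  linarith

/-- Each `Γ k` puts positive mass on `[δ, ∞)` for some `δ > 0`. -/
lemma exists_Ici_pos (D : Data K) (k : Fin K) :
    ∃ δ : ℝ, 0 < δ ∧ 0 < D.Γ k (Set.Ici δ) := by
  by_contra h
  push_neg at h
  have hz : ∀ δ : ℝ, 0 < δ → D.Γ k (Set.Ici δ) = 0 := fun δ hδ =>
    le_antisymm (h δ hδ) zero_le
  have hsub : Set.Ioi (0:ℝ) ⊆ ⋃ n : ℕ, Set.Ici ((n:ℝ) + 1)⁻¹ := by
    intro y hy
    obtain ⟨n, hn⟩ := exists_nat_one_div_lt (Set.mem_Ioi.mp hy)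
    refine Set.mem_iUnion.mpr ⟨n, ?_⟩
    rw [Set.mem_Ici]
    rw [one_div] at hn
    exact hn.le
  have hIoi : D.Γ k (Set.Ioi 0) = 0 := by
    refine measure_mono_null hsub ?_
    refine measure_iUnion_null fun n => hz _ ?_
    positivity
  have huniv : (Set.univ : Set ℝ) ⊆ Set.Iio 0 ∪ {0} ∪ Set.Ioi 0 := by
    intro y _
    rcases lt_trichotomy y 0 with h | h | h
    · exact Or.inl (Or.inl h)
    · exact Or.inl (Or.inr h)
    · exact Or.inr h
  have : (1 : ℝ≥0∞) ≤ 0 := by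
    calc (1 : ℝ≥0∞) = D.Γ k Set.univ := (measure_univ).symm
    _ ≤ D.Γ k (Set.Iio 0 ∪ {0} ∪ Set.Ioi 0) := measure_mono huniv
    _ ≤ D.Γ k (Set.Iio 0 ∪ {0}) + D.Γ k (Set.Ioi 0) := measure_union_le _ _
    _ ≤ (D.Γ k (Set.Iio 0) + D.Γ k {0}) + D.Γ k (Set.Ioi 0) :=
        add_le_add_left (measure_union_le _ _) _
    _ = 0 := by rw [D.Γ_null_neg k, D.Γ_noAtom k 0, hIoi]; simp
  simp at this

lemma fin_nonempty (D : Data K) : Nonempty (Fin K) := by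
  rcases Nat.eq_zero_or_pos K with h | h
  · exfalso
    have := D.rho_gt_one
    subst h
    simp only [Finset.univ_eq_empty, Finset.sum_empty] at this
    linarith
  · exact ⟨⟨0, h⟩⟩

end Aux2
lemma kern_nonneg (Γ : MeasureTheory.Measure ℝ) (v : ℝ) (B : Set (ℝ × ℝ)) :
    0 ≤ kern Γ v B := ENNReal.toReal_nonneg

/-- For `ϑ ∈ I`, the fluid model solution `ζ` with initial measure `ϑ`, and
the workload fluid model solution `w` with `w(0) = w_ϑ`, one has `w_{ζ(t)} = w(t)` for all
`t ≥ 0`. -/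
theorem fluid_workload_edge {K : ℕ} (D : Data K)
    (ϑ : Fin K → MeasureTheory.Measure (ℝ × ℝ)) (hϑ : MemI D ϑ)
    (ζ : ℝ → Fin K → MeasureTheory.Measure (ℝ × ℝ)) (hζ : IsFluidSol D ϑ ζ)
    (w : ℝ → ℝ) (hw : IsWorkloadSol D w) (hw0 : w 0 = wMeas ϑ) :
    ∀ t : ℝ, 0 ≤ t → wMeas (ζ t) = w t := by
  obtain ⟨w', hw', hw'0, hfin, hzero0, hform⟩ := hζ
  have hww' : ∀ s : ℝ, 0 ≤ s → w s = w' s := fun s hs =>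
    workload_unique hw hw' (by rw [hw0, hw'0]) hs
  intro t ht
  rw [hww' t ht]
  rcases ht.lt_or_eq with ht0 | ht0
  swap
  · -- `t = 0`
    have h0 : ζ t = ϑ := by
      funext k
      rw [← ht0]
      exact hzero0 k
    rw [h0, ← hw'0, ← ht0]
  -- `t > 0`
  set S := {x : ℝ | 0 ≤ x ∧ 0 < ∑ k, ζ t k (Set.Ici x ×ˢ Set.Ici (0:ℝ))} with hS
  have hwt0 : 0 ≤ w' t := hw'.1 t ht
  -- upper bound: every element of S is at most `w' t`
  have hub : ∀ x ∈ S, x ≤ w' t := by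
    intro x hxS
    by_contra hgt
    push_neg at hgt
    have hx : 0 ≤ x := hxS.1
    have hzeroall : ∀ k : Fin K, ζ t k (Set.Ici x ×ˢ Set.Ici (0:ℝ)) ≤
        ϑ k (Set.Ici (x + t) ×ˢ Set.Ici (0:ℝ)) := by
      intro k
      obtain ⟨hii, heq⟩ := hform k (Set.Ici x ×ˢ Set.Ici (0:ℝ)) (rect_subset_Q hx)
        (measurableSet_Ici.prod measurableSet_Ici) t ht
      have hptw : Set.EqOn (fun s => kern (D.Γ k) (w' s)
          (shiftd (Set.Ici x ×ˢ Set.Ici (0:ℝ)) (t - s))) (fun _ => (0:ℝ))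
          (Set.uIcc 0 t) := by
        intro s hs
        rw [Set.uIcc_of_le ht] at hs
        have hts : 0 ≤ t - s := by linarith [hs.2]
        simp only
        rw [shiftd_rect hx hts, kern_rect]
        rw [if_neg]
        rintro ⟨hpos, hle⟩
        have := workload_addmono hw' hs.1 hs.2
        linarith
      have hint0 : (∫ s in (0:ℝ)..t, kern (D.Γ k) (w' s)
          (shiftd (Set.Ici x ×ˢ Set.Ici (0:ℝ)) (t - s))) = 0 := by
        rw [intervalIntegral.integral_congr hptw]
        simp
      rw [heq, hint0, mul_zero, ENNReal.ofReal_zero, add_zero, shiftd_rect hx ht]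
      exact measure_mono (Set.prod_mono_right (Set.Ici_subset_Ici.mpr ht))
    have hwm : wMeas ϑ < x + t := by
      have h1 : w' 0 + 0 ≤ w' t + t := workload_addmono hw' le_rfl ht
      rw [← hw'0]
      linarith
    have hzsum : (∑ k, ϑ k (Set.Ici (x + t) ×ˢ Set.Ici (0:ℝ))) = 0 :=
      sum_measure_zero_of_gt hϑ.2.2.2.1 (by linarith) hwm
    have : (∑ k, ζ t k (Set.Ici x ×ˢ Set.Ici (0:ℝ))) = 0 := by
      refine le_antisymm ?_ zero_le
      calc (∑ k, ζ t k (Set.Ici x ×ˢ Set.Ici (0:ℝ)))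
          ≤ ∑ k, ϑ k (Set.Ici (x + t) ×ˢ Set.Ici (0:ℝ)) :=
            Finset.sum_le_sum fun k _ => hzeroall k
        _ = 0 := hzsum
    exact absurd hxS.2 (by rw [this]; exact lt_irrefl 0)
  have hbdd : BddAbove S := ⟨w' t, hub⟩
  -- lower bound: for `0 < ε < w' t`, `w' t - ε ∈ S`
  have hlow : ∀ ε : ℝ, 0 < ε → ε < w' t → (w' t - ε) ∈ S := by
    intro ε hε hεw
    set x := w' t - ε with hxdef
    have hx : 0 < x := by simp only [hxdef]; linarith
    obtain ⟨k0⟩ := fin_nonempty D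
    obtain ⟨δ0, hδ0, hΓ0⟩ := exists_Ici_pos D k0
    -- continuity of `s ↦ w' s + s` at `t` within `[0, t]`
    have hg : ContinuousOn (fun s => w' s + s) (Set.Icc 0 t) :=
      (workload_continuousOn hw' ht).add continuousOn_id
    have hgt : x + t < w' t + t := by simp only [hxdef]; linarith
    have hev : ∀ᶠ s in nhdsWithin t (Set.Icc 0 t),
        x + t < w' s + s := (hg t ⟨ht, le_rfl⟩) (Ioi_mem_nhds hgt)
    rw [eventually_nhdsWithin_iff] at hev
    rw [Metric.eventually_nhds_iff] at hev
    obtain ⟨δ1, hδ1, hprop⟩ := hev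
    set δ := min (min δ0 (δ1 / 2)) t with hδdef
    have hδpos : 0 < δ := lt_min (lt_min hδ0 (by linarith)) ht0
    have hδt : δ ≤ t := min_le_right _ _
    have hδδ0 : δ ≤ δ0 := (min_le_left _ _).trans (min_le_left _ _)
    have hδδ1 : δ ≤ δ1 / 2 := (min_le_left _ _).trans (min_le_right _ _)
    set c := (D.Γ k0 (Set.Ici δ0)).toReal with hcdef
    have hc : 0 < c := ENNReal.toReal_pos (ne_of_gt hΓ0) (measure_ne_top _ _)
    obtain ⟨hii, heq⟩ := hform k0 (Set.Ici x ×ˢ Set.Ici (0:ℝ)) (rect_subset_Q hx.le)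
      (measurableSet_Ici.prod measurableSet_Ici) t ht
    set f := fun s => kern (D.Γ k0) (w' s)
      (shiftd (Set.Ici x ×ˢ Set.Ici (0:ℝ)) (t - s)) with hfdef
    have hflow : ∀ s ∈ Set.Icc (t - δ) t, c ≤ f s := by
      intro s hs
      have hs0 : 0 ≤ s := by linarith [hs.1]
      have hst : s ≤ t := hs.2
      have hts : 0 ≤ t - s := by linarith
      have htsδ : t - s ≤ δ := by linarith [hs.1]
      have hdist : dist s t < δ1 := by
        rw [Real.dist_eq, abs_of_nonpos (by linarith)]
        linarith
      have hgs : x + t < w' s + s := hprop hdist ⟨hs0, hst⟩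
      simp only [hfdef]
      rw [shiftd_rect hx.le hts, kern_rect]
      rw [if_pos ⟨by linarith, by linarith⟩]
      exact ENNReal.toReal_mono (measure_ne_top _ _)
        (measure_mono (Set.Ici_subset_Ici.mpr (by linarith)))
    have hi1 : IntervalIntegrable f volume 0 (t - δ) := by
      apply hii.mono_set
      rw [Set.uIcc_of_le (by linarith : (0:ℝ) ≤ t - δ), Set.uIcc_of_le ht]
      exact Set.Icc_subset_Icc le_rfl (by linarith)
    have hi2 : IntervalIntegrable f volume (t - δ) t := by
      apply hii.mono_set
      rw [Set.uIcc_of_le (by linarith : t - δ ≤ t), Set.uIcc_of_le ht]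
      exact Set.Icc_subset_Icc (by linarith) le_rfl
    have h1 : 0 ≤ ∫ s in (0:ℝ)..(t - δ), f s :=
      intervalIntegral.integral_nonneg (by linarith) (fun s _ => kern_nonneg _ _ _)
    have h2 : c * δ ≤ ∫ s in (t - δ)..t, f s := by
      have := intervalIntegral.integral_mono_on (by linarith : t - δ ≤ t)
        intervalIntegrable_const hi2 hflow
      rw [intervalIntegral.integral_const, smul_eq_mul] at this
      calc c * δ = (t - (t - δ)) * c := by ring
        _ ≤ ∫ s in (t - δ)..t, f s := this
    have hsum := intervalIntegral.integral_add_adjacent_intervals hi1 hi2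
    have hpos : 0 < ∫ s in (0:ℝ)..t, f s := by
      rw [← hsum]
      have := mul_pos hc hδpos
      linarith
    have hζpos : 0 < ζ t k0 (Set.Ici x ×ˢ Set.Ici (0:ℝ)) := by
      rw [heq]
      have h3 : (0:ℝ≥0∞) < ENNReal.ofReal (D.lam k0 * ∫ s in (0:ℝ)..t, f s) :=
        ENNReal.ofReal_pos.mpr (mul_pos (D.lam_pos k0) hpos)
      calc (0:ℝ≥0∞) < ENNReal.ofReal (D.lam k0 * ∫ s in (0:ℝ)..t, f s) := h3
        _ ≤ _ := le_add_self
    refine ⟨hx.le, ?_⟩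
    calc (0:ℝ≥0∞) < ζ t k0 (Set.Ici x ×ˢ Set.Ici (0:ℝ)) := hζpos
      _ ≤ ∑ k, ζ t k (Set.Ici x ×ˢ Set.Ici (0:ℝ)) :=
        Finset.single_le_sum (f := fun k => ζ t k (Set.Ici x ×ˢ Set.Ici (0:ℝ)))
          (fun i _ => zero_le) (Finset.mem_univ k0)
  -- assemble
  show sSup S = w' t
  have hle : sSup S ≤ w' t := by
    rcases S.eq_empty_or_nonempty with h | h
    · rw [h, Real.sSup_empty]; exact hwt0
    · exact csSup_le h hub
  have hge : w' t ≤ sSup S := by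
    rcases hwt0.lt_or_eq with hpos | hzero
    · have hne : (w' t - w' t / 2) ∈ S := hlow (w' t / 2) (by linarith) (by linarith)
      have hgehalf : w' t - w' t / 2 ≤ sSup S := le_csSup hbdd hne
      by_contra hcon
      push_neg at hcon
      have hsS0 : 0 < sSup S := by linarith
      set ε := (w' t - sSup S) / 2 with hεdef
      have hε1 : 0 < ε := by simp only [hεdef]; linarith
      have hε2 : ε < w' t := by simp only [hεdef]; linarith
      have := le_csSup hbdd (hlow ε hε1 hε2)
      simp only [hεdef] at this
      linarith
    · rw [← hzero]
      rcases S.eq_empty_or_nonempty with h | h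
      · rw [h, Real.sSup_empty]
      · obtain ⟨x, hxS⟩ := h
        exact le_trans hxS.1 (le_csSup hbdd hxS)
  exact le_antisymm hle hge

end OverloadedFIFO
end
end

section
/- Let ϑ ∈ I and let ζ be the unique fluid model solution with initial measure ϑ. Then for every T > 0 and every ε > 0 there exists κ > 0 such that max_{1≤k≤K} sup_{t∈[0,T]} sup_{x∈[0,∞)²} ζ_k(t)(C_x^κ) < ε. -/
open MeasureTheory Set Filter Topology
open scoped ENNReal

noncomputable section

namespace OverloadedFIFO

/-! ### Auxiliary lemmas -/

section Aux

lemma abs_le_sqrt_sq_add_sq (a b : ℝ) : |a| ≤ Real.sqrt (a^2 + b^2) := by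
  rw [← Real.sqrt_sq_eq_abs]
  exact Real.sqrt_le_sqrt (by nlinarith [sq_nonneg b])

lemma abs_le_sqrt_sq_add_sq' (a b : ℝ) : |b| ≤ Real.sqrt (a^2 + b^2) := by
  rw [← Real.sqrt_sq_eq_abs]
  exact Real.sqrt_le_sqrt (by nlinarith [sq_nonneg a])

lemma sqrt_tri (a b c d : ℝ) :
    Real.sqrt ((a+c)^2+(b+d)^2) ≤ Real.sqrt (a^2+b^2) + Real.sqrt (c^2+d^2) := by
  have h1 : a*c + b*d ≤ Real.sqrt (a^2+b^2) * Real.sqrt (c^2+d^2) := by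
    rcases le_or_gt (a*c + b*d) 0 with h | h
    · exact h.trans (mul_nonneg (Real.sqrt_nonneg _) (Real.sqrt_nonneg _))
    · rw [← Real.sqrt_mul (by positivity)]
      rw [show Real.sqrt ((a^2+b^2)*(c^2+d^2)) = Real.sqrt ((a*c+b*d)^2 + (a*d-b*c)^2) by ring_nf]
      calc a*c+b*d = |a*c+b*d| := (abs_of_pos h).symm
        _ ≤ _ := abs_le_sqrt_sq_add_sq _ _
  have h2 : (a+c)^2+(b+d)^2 ≤ (Real.sqrt (a^2+b^2) + Real.sqrt (c^2+d^2))^2 := by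
    have e1 : Real.sqrt (a^2+b^2) ^ 2 = a^2+b^2 := Real.sq_sqrt (by positivity)
    have e2 : Real.sqrt (c^2+d^2) ^ 2 = c^2+d^2 := Real.sq_sqrt (by positivity)
    nlinarith [h1]
  calc Real.sqrt ((a+c)^2+(b+d)^2) ≤ Real.sqrt ((Real.sqrt (a^2+b^2) + Real.sqrt (c^2+d^2))^2) :=
        Real.sqrt_le_sqrt h2
    _ = _ := Real.sqrt_sq (by positivity)

lemma measurableSet_Q : MeasurableSet Q := by
  have : Q = {p : ℝ × ℝ | 0 ≤ p.1} ∩ {p : ℝ × ℝ | 0 ≤ p.2} := rfl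
  rw [this]
  exact (measurableSet_le measurable_const measurable_fst).inter
    (measurableSet_le measurable_const measurable_snd)

lemma isOpen_enl_aux (B : Set (ℝ × ℝ)) (κ : ℝ) :
    IsOpen {x : ℝ × ℝ | ∃ y ∈ B, Real.sqrt ((x.1-y.1)^2+(x.2-y.2)^2) < κ} := by
  rw [Metric.isOpen_iff]
  rintro x ⟨y, hyB, hxy⟩
  refine ⟨(κ - Real.sqrt ((x.1-y.1)^2+(x.2-y.2)^2)) / 3, by linarith, ?_⟩
  intro z hz
  refine ⟨y, hyB, ?_⟩
  set d := Real.sqrt ((x.1-y.1)^2+(x.2-y.2)^2) with hd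
  have h1 : Real.sqrt ((z.1-y.1)^2+(z.2-y.2)^2) ≤
      Real.sqrt ((x.1-y.1)^2+(x.2-y.2)^2) + Real.sqrt ((z.1-x.1)^2+(z.2-x.2)^2) := by
    have := sqrt_tri (x.1-y.1) (x.2-y.2) (z.1-x.1) (z.2-x.2)
    have e : (x.1-y.1 + (z.1-x.1)) = z.1 - y.1 := by ring
    have e2 : (x.2-y.2 + (z.2-x.2)) = z.2 - y.2 := by ring
    rwa [e, e2] at this
  have hzd : max (dist z.1 x.1) (dist z.2 x.2) < (κ - d) / 3 := by
    rw [← Prod.dist_eq]; exact Metric.mem_ball.1 hz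
  have hz1 : |z.1 - x.1| < (κ - d) / 3 := by
    have := (max_lt_iff.1 hzd).1; rwa [Real.dist_eq] at this
  have hz2 : |z.2 - x.2| < (κ - d) / 3 := by
    have := (max_lt_iff.1 hzd).2; rwa [Real.dist_eq] at this
  have h2 : Real.sqrt ((z.1-x.1)^2+(z.2-x.2)^2) ≤ |z.1-x.1| + |z.2-x.2| := by
    rw [← Real.sqrt_sq_eq_abs (z.1-x.1), ← Real.sqrt_sq_eq_abs (z.2-x.2)]
    have := sqrt_tri (z.1-x.1) 0 0 (z.2-x.2)
    simpa using this
  calc Real.sqrt ((z.1-y.1)^2+(z.2-y.2)^2) ≤ d + (|z.1-x.1| + |z.2-x.2|) := by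
        rw [hd]; linarith
    _ < κ := by linarith

lemma measurableSet_enlarge (B : Set (ℝ × ℝ)) (κ : ℝ) : MeasurableSet (enlarge B κ) := by
  have : enlarge B κ = Q ∩ {x : ℝ × ℝ | ∃ y ∈ B, Real.sqrt ((x.1-y.1)^2+(x.2-y.2)^2) < κ} := rfl
  rw [this]
  exact measurableSet_Q.inter (isOpen_enl_aux B κ).measurableSet

lemma enlarge_shift_subset (z : ℝ × ℝ) (κ : ℝ) :
    enlarge (shift Cset z) κ ⊆ {y : ℝ × ℝ | |y.1 - z.1| < κ} ∪ {y : ℝ × ℝ | |y.2 - z.2| < κ} := by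
  rintro y ⟨hyQ, p, ⟨hpQ, hpC⟩, hd⟩
  rcases hpC with ⟨h1, h2⟩ | ⟨h1, h2⟩
  · right
    have : |y.2 - p.2| ≤ Real.sqrt ((y.1-p.1)^2+(y.2-p.2)^2) := abs_le_sqrt_sq_add_sq' _ _
    have h3 : p.2 = z.2 := by linarith [sub_eq_zero.1 h2]
    simp only [mem_setOf_eq]
    calc |y.2 - z.2| = |y.2 - p.2| := by rw [h3]
      _ < κ := lt_of_le_of_lt this hd
  · left
    have : |y.1 - p.1| ≤ Real.sqrt ((y.1-p.1)^2+(y.2-p.2)^2) := abs_le_sqrt_sq_add_sq _ _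
    have h3 : p.1 = z.1 := by linarith [sub_eq_zero.1 h1]
    simp only [mem_setOf_eq]
    calc |y.1 - z.1| = |y.1 - p.1| := by rw [h3]
      _ < κ := lt_of_le_of_lt this hd

lemma shiftd_enlarge_subset (x : ℝ × ℝ) (hx : x ∈ Q) (κ : ℝ) {u : ℝ} (hu : 0 ≤ u) :
    shiftd (enlarge (shift Cset x) κ) u ⊆ enlarge (shift Cset (x.1 + u, x.2 + u)) κ := by
  rintro y ⟨hyQ, hyQ2, p, ⟨hpQ, hpC⟩, hd⟩
  refine ⟨hyQ, (p.1 + u, p.2 + u), ⟨⟨by exact add_nonneg hpQ.1 hu, add_nonneg hpQ.2 hu⟩, ?_⟩, ?_⟩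
  · rcases hpC with ⟨h1, h2⟩ | ⟨h1, h2⟩
    · exact Or.inl ⟨by simpa using h1, by simpa using h2⟩
    · exact Or.inr ⟨by simpa using h1, by simpa using h2⟩
  · have e1 : y.1 - (p.1 + u) = y.1 - u - p.1 := by ring
    have e2 : y.2 - (p.2 + u) = y.2 - u - p.2 := by ring
    rw [e1, e2]; exact hd

lemma unif_small (ν : Measure ℝ) [IsFiniteMeasure ν] (hν : ∀ a : ℝ, ν {a} = 0)
    {ε : ℝ} (hε : 0 < ε) :
    ∃ κ : ℝ, 0 < κ ∧ ∀ a : ℝ, ν (Set.Ioo (a - κ) (a + κ)) < ENNReal.ofReal ε := by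
  have htail : Tendsto (fun n : ℕ => ν ((Set.Icc (-(n:ℝ)) n)ᶜ)) atTop
      (𝓝 (ν (⋂ n : ℕ, (Set.Icc (-(n:ℝ)) n)ᶜ))) := by
    refine tendsto_measure_iInter_atTop (fun n => (measurableSet_Icc.compl).nullMeasurableSet)
      ?_ ⟨0, measure_ne_top _ _⟩
    intro m n hmn
    apply compl_subset_compl.2
    have : (m:ℝ) ≤ n := Nat.cast_le.2 hmn
    exact Icc_subset_Icc (by linarith) this
  have hiempty : (⋂ n : ℕ, (Set.Icc (-(n:ℝ)) n)ᶜ) = ∅ := by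
    ext x
    simp only [Set.mem_iInter, Set.mem_compl_iff, Set.mem_Icc, Set.mem_empty_iff_false,
      iff_false, not_forall, not_not]
    obtain ⟨n, hn⟩ := exists_nat_gt |x|
    exact ⟨n, by rcases abs_lt.1 hn with ⟨h1, h2⟩; exact ⟨by linarith, by linarith⟩⟩
  rw [hiempty] at htail
  simp only [measure_empty] at htail
  obtain ⟨N, hN⟩ := (ENNReal.tendsto_atTop_zero.1 htail) (ENNReal.ofReal (ε/2))
    (by simp [ENNReal.ofReal_pos]; linarith)
  have hNbd : ν ((Set.Icc (-(N:ℝ)) N)ᶜ) < ENNReal.ofReal ε := by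
    refine lt_of_le_of_lt (hN N le_rfl) (ENNReal.ofReal_lt_ofReal_iff hε |>.2 (by linarith))
  have hloc : ∀ a : ℝ, ∃ r : ℝ, 0 < r ∧ ν (Set.Icc (a - 2*r) (a + 2*r)) < ENNReal.ofReal ε := by
    intro a
    have h2 : Tendsto (fun n : ℕ => ν (Set.Icc (a - 1/(n+1)) (a + 1/(n+1)))) atTop
        (𝓝 (ν (⋂ n : ℕ, Set.Icc (a - 1/(n+1)) (a + 1/(n+1))))) := by
      refine tendsto_measure_iInter_atTop (fun n => measurableSet_Icc.nullMeasurableSet)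
        ?_ ⟨0, measure_ne_top _ _⟩
      intro m n hmn
      have hc : (m:ℝ) ≤ n := Nat.cast_le.2 hmn
      have : (1:ℝ)/(n+1) ≤ 1/(m+1) := by
        apply one_div_le_one_div_of_le (by positivity); linarith
      exact Icc_subset_Icc (by linarith) (by linarith)
    have hsingle : (⋂ n : ℕ, Set.Icc (a - 1/(n+1)) (a + 1/(n+1))) = {a} := by
      ext x
      simp only [Set.mem_iInter, Set.mem_Icc, Set.mem_singleton_iff]
      constructor
      · intro h
        by_contra hne
        have hpos : 0 < |x - a| := abs_pos.2 (sub_ne_zero.2 hne)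
        obtain ⟨n, hn⟩ := exists_nat_gt (1/|x - a|)
        have hn1 : (0:ℝ) < (n:ℝ)+1 := by positivity
        have h1 : 1/((n:ℝ)+1) < |x - a| := by
          rw [div_lt_iff₀ hn1]
          rw [div_lt_iff₀ hpos] at hn
          nlinarith
        have h3 : |x - a| ≤ 1/((n:ℝ)+1) := by
          rcases h n with ⟨ha, hb⟩
          exact abs_le.2 ⟨by linarith, by linarith⟩
        linarith
      · rintro rfl n
        have hn1 : (0:ℝ) < 1/((n:ℝ)+1) := by positivity
        exact ⟨by linarith, by linarith⟩
    rw [hsingle, hν a] at h2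
    obtain ⟨M, hM⟩ := (ENNReal.tendsto_atTop_zero.1 h2) (ENNReal.ofReal (ε/2))
      (by simp [ENNReal.ofReal_pos]; linarith)
    refine ⟨1/(2*((M:ℝ)+1)), by positivity, ?_⟩
    have e : 2 * (1/(2*((M:ℝ)+1))) = 1/((M:ℝ)+1) := by
      field_simp
    rw [e]
    exact lt_of_le_of_lt (hM M le_rfl) (ENNReal.ofReal_lt_ofReal_iff hε |>.2 (by linarith))
  choose r hrpos hrsmall using hloc
  -- compact cover
  have hcov : Set.Icc (-((N:ℝ)+1)) ((N:ℝ)+1) ⊆ ⋃ a ∈ (Set.univ : Set ℝ), Metric.ball a (r a) := by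
    intro a _
    exact Set.mem_biUnion trivial (Metric.mem_ball_self (hrpos a))
  obtain ⟨t, hts⟩ := isCompact_Icc.elim_finite_subcover_image
    (fun a _ => Metric.isOpen_ball) hcov
  obtain ⟨htsub, htfin, htcov⟩ := hts
  have h0mem : (0:ℝ) ∈ Set.Icc (-((N:ℝ)+1)) ((N:ℝ)+1) := by
    constructor <;> [linarith [Nat.cast_nonneg (α := ℝ) N]; linarith [Nat.cast_nonneg (α := ℝ) N]]
  have htne : htfin.toFinset.Nonempty := by
    obtain ⟨a', ha'⟩ := Set.mem_iUnion₂.1 (htcov h0mem)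
    exact ⟨a', htfin.mem_toFinset.2 ha'.1⟩
  set κ0 := htfin.toFinset.inf' htne r with hκ0
  refine ⟨min 1 κ0, lt_min one_pos ?_, ?_⟩
  · rw [hκ0, Finset.lt_inf'_iff]
    intro b _; exact hrpos b
  · intro a
    set κ := min 1 κ0 with hκ
    rcases le_or_gt |a| ((N:ℝ)+1) with hcase | hcase
    · have haI : a ∈ Set.Icc (-((N:ℝ)+1)) ((N:ℝ)+1) := by
        rcases abs_le.1 hcase with ⟨h1, h2⟩; exact ⟨h1, h2⟩
      obtain ⟨a', ha'⟩ := Set.mem_iUnion₂.1 (htcov haI)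
      obtain ⟨ha't, ha'b⟩ := ha'
      have hκr : κ ≤ r a' := le_trans (min_le_right _ _)
        (Finset.inf'_le r (htfin.mem_toFinset.2 ha't))
      have hsub : Set.Ioo (a - κ) (a + κ) ⊆ Set.Icc (a' - 2*(r a')) (a' + 2*(r a')) := by
        intro x hx
        have h1 : |x - a| < κ := abs_lt.2 ⟨by linarith [hx.1], by linarith [hx.2]⟩
        have h2 : |a - a'| < r a' := by
          have := Metric.mem_ball.1 ha'b; rwa [Real.dist_eq] at this
        have h3 : |x - a'| ≤ |x - a| + |a - a'| := by
          calc |x - a'| = |(x - a) + (a - a')| := by ring_nf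
            _ ≤ _ := abs_add_le _ _
        have h4 : |x - a'| < 2 * r a' := by
          have := lt_of_lt_of_le h1 hκr; linarith
        rcases abs_le.1 h4.le with ⟨h5, h6⟩
        exact ⟨by linarith, by linarith⟩
      exact lt_of_le_of_lt (measure_mono hsub) (hrsmall a')
    · have hsub : Set.Ioo (a - κ) (a + κ) ⊆ (Set.Icc (-(N:ℝ)) N)ᶜ := by
        intro x hx
        have h1 : |x - a| < 1 := by
          have : |x - a| < κ := abs_lt.2 ⟨by linarith [hx.1], by linarith [hx.2]⟩
          exact lt_of_lt_of_le this (min_le_left _ _)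
        intro hmem
        have h2 : |x| ≤ N := abs_le.2 ⟨by linarith [hmem.1], by linarith [hmem.2]⟩
        have h3 : |a| ≤ |a - x| + |x| := by
          calc |a| = |(a - x) + x| := by ring_nf
            _ ≤ _ := abs_add_le _ _
        rw [abs_sub_comm] at h3
        linarith
      exact lt_of_le_of_lt (measure_mono hsub) hNbd

end Aux


section Workload

/-- `S(v) = Σ_k ρ_k G_k(v)`. -/
def SG {K : ℕ} (D : Data K) (v : ℝ) : ℝ := ∑ k, D.rho k * Gk (D.Γ k) v

variable {K : ℕ} (D : Data K)

lemma Gk_nonneg_s12 (Γ : Measure ℝ) (v : ℝ) : 0 ≤ Gk Γ v := ENNReal.toReal_nonneg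

lemma Gk_anti_s12 (Γ : Measure ℝ) [IsFiniteMeasure Γ] : Antitone (Gk Γ) := by
  intro u v huv
  exact ENNReal.toReal_mono (measure_ne_top _ _) (measure_mono (Ioi_subset_Ioi huv))

lemma rho_pos (k : Fin K) : 0 < D.rho k := div_pos (D.lam_pos k) (D.mu_pos k)

lemma SG_anti : Antitone (SG D) := by
  intro u v huv
  apply Finset.sum_le_sum
  intro k _
  exact mul_le_mul_of_nonneg_left (Gk_anti_s12 (D.Γ k) huv) (rho_pos D k).le

lemma SG_nonneg (v : ℝ) : 0 ≤ SG D v :=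
  Finset.sum_nonneg fun k _ => mul_nonneg (rho_pos D k).le (Gk_nonneg_s12 _ _)

lemma Gk_at_zero (k : Fin K) : Gk (D.Γ k) 0 = 1 := by
  have h1 : D.Γ k (Set.Iic 0) = 0 := by
    have : Set.Iic (0:ℝ) = Set.Iio 0 ∪ {0} := by
      ext x; simp [le_iff_lt_or_eq]
    rw [this]
    refine le_antisymm (le_trans (measure_union_le _ _) ?_) zero_le
    rw [D.Γ_null_neg k, D.Γ_noAtom k 0]; simp
  have h2 : D.Γ k (Set.Ioi 0) = 1 := by
    have hc : Set.Ioi (0:ℝ) = (Set.Iic 0)ᶜ := by simp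
    rw [hc, measure_compl measurableSet_Iic (measure_ne_top _ _), h1, measure_univ]
    simp
  rw [Gk, h2]; simp

lemma SG_at_zero : 1 < SG D 0 := by
  have : SG D 0 = ∑ k, D.rho k := by
    apply Finset.sum_congr rfl
    intro k _; rw [Gk_at_zero D k, mul_one]
  rw [this]
  exact D.rho_gt_one

lemma Gk_left_lim (Γ : Measure ℝ) [IsProbabilityMeasure Γ] (hatom : ∀ x : ℝ, Γ {x} = 0)
    (b : ℝ) : Tendsto (fun n : ℕ => Gk Γ (b - 1/(n+1))) atTop (𝓝 (Gk Γ b)) := by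
  have hmeas : Tendsto (fun n : ℕ => Γ (Set.Ioi (b - 1/(n+1)))) atTop
      (𝓝 (Γ (⋂ n : ℕ, Set.Ioi (b - 1/(n+1))))) := by
    refine tendsto_measure_iInter_atTop (fun n => measurableSet_Ioi.nullMeasurableSet)
      ?_ ⟨0, measure_ne_top _ _⟩
    intro m n hmn
    have hc : (m:ℝ) ≤ n := Nat.cast_le.2 hmn
    have : (1:ℝ)/(n+1) ≤ 1/(m+1) := by
      apply one_div_le_one_div_of_le (by positivity); linarith
    exact Ioi_subset_Ioi (by linarith)
  have hInter : (⋂ n : ℕ, Set.Ioi (b - 1/(n+1))) = Set.Ici b := by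
    ext x
    simp only [Set.mem_iInter, Set.mem_Ioi, Set.mem_Ici]
    constructor
    · intro h
      by_contra hlt
      push_neg at hlt
      obtain ⟨n, hn⟩ := exists_nat_gt (1/(b - x))
      have hbx : 0 < b - x := by linarith
      have hn1 : (0:ℝ) < (n:ℝ)+1 := by positivity
      have h1 : 1/((n:ℝ)+1) < b - x := by
        rw [div_lt_iff₀ hn1]
        rw [div_lt_iff₀ hbx] at hn
        nlinarith
      have := h n
      linarith
    · intro h n
      have : (0:ℝ) < 1/((n:ℝ)+1) := by positivity
      linarith
  have hIci : Γ (Set.Ici b) = Γ (Set.Ioi b) := by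
    refine le_antisymm ?_ (measure_mono Set.Ioi_subset_Ici_self)
    have : Set.Ici b ⊆ {b} ∪ Set.Ioi b := by
      intro x hx
      rcases eq_or_lt_of_le (Set.mem_Ici.1 hx) with h | h
      · exact Or.inl (by simp [h.symm])
      · exact Or.inr h
    refine le_trans (measure_mono this) (le_trans (measure_union_le _ _) ?_)
    rw [hatom b]; simp
  rw [hInter, hIci] at hmeas
  have := (ENNReal.tendsto_toReal (measure_ne_top Γ (Set.Ioi b))).comp hmeas
  exact this

lemma SG_le_of_sSup (hbdd : BddAbove {v : ℝ | 1 ≤ SG D v}) :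
    1 ≤ SG D (sSup {v : ℝ | 1 ≤ SG D v}) := by
  set bset := {v : ℝ | 1 ≤ SG D v} with hbset
  have hne : bset.Nonempty := ⟨0, (SG_at_zero D).le⟩
  set b := sSup bset with hb
  have htd : Tendsto (fun n : ℕ => SG D (b - 1/(n+1))) atTop (𝓝 (SG D b)) := by
    apply tendsto_finset_sum
    intro k _
    exact ((Gk_left_lim (D.Γ k) (D.Γ_noAtom k) b).const_mul (D.rho k))
  refine ge_of_tendsto htd ?_
  filter_upwards with n
  have hlt : b - 1/((n:ℝ)+1) < b := by
    have : (0:ℝ) < 1/((n:ℝ)+1) := by positivity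
    linarith
  obtain ⟨v, hv, hv2⟩ := exists_lt_of_lt_csSup hne hlt
  exact le_trans hv (SG_anti D hv2.le)

end Workload

section C0

variable {K : ℕ}

/-- Key analytic lemma: away from time `0`, the function `h(s) = w(s) + s` increases at a
uniformly positive rate. -/
lemma exists_c0 (D : Data K) (w : ℝ → ℝ) (hw : IsWorkloadSol D w)
    (hpos : ∀ v : ℝ, v < w 0 → 0 < SG D v)
    {T δ : ℝ} (hδ : 0 < δ) (hδT : δ ≤ T) :
    ∃ c0 : ℝ, 0 < c0 ∧ ∀ s1 s2 : ℝ, δ ≤ s1 → s1 ≤ s2 → s2 ≤ T →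
      c0 * (s2 - s1) ≤ (w s2 + s2) - (w s1 + s1) := by
  obtain ⟨hwnn, hwint, hweq⟩ := hw
  have hT : 0 < T := lt_of_lt_of_le hδ hδT
  -- subinterval integrability
  have hint' : ∀ k : Fin K, ∀ s1 s2 : ℝ, 0 ≤ s1 → s2 ≤ T → s1 ≤ s2 →
      IntervalIntegrable (fun s => Gk (D.Γ k) (w s)) volume s1 s2 := by
    intro k s1 s2 h1 h3 h2
    refine (hwint k T hT.le).mono_set ?_
    rw [Set.uIcc_of_le h2, Set.uIcc_of_le hT.le]
    exact Set.Icc_subset_Icc h1 h3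
  -- increment formula
  have hdiff : ∀ s1 s2 : ℝ, 0 ≤ s1 → s1 ≤ s2 → s2 ≤ T →
      (w s2 + s2) - (w s1 + s1) = ∑ k, D.rho k * ∫ s in s1..s2, Gk (D.Γ k) (w s) := by
    intro s1 s2 h1 h2 h3
    have e2 := hweq s2 (le_trans h1 h2)
    have e1 := hweq s1 h1
    have hsplit : ∀ k : Fin K, (∫ s in (0:ℝ)..s2, Gk (D.Γ k) (w s)) =
        (∫ s in (0:ℝ)..s1, Gk (D.Γ k) (w s)) + ∫ s in s1..s2, Gk (D.Γ k) (w s) := by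
      intro k
      exact (intervalIntegral.integral_add_adjacent_intervals
        (hint' k 0 s1 le_rfl (le_trans h2 h3) h1)
        (hint' k s1 s2 h1 h3 h2)).symm
    have : w s2 - w s1 = (∑ k, D.rho k * ∫ s in s1..s2, Gk (D.Γ k) (w s)) - (s2 - s1) := by
      rw [e2, e1]
      have : (∑ k, D.rho k * ∫ s in (0:ℝ)..s2, Gk (D.Γ k) (w s)) =
          (∑ k, D.rho k * ∫ s in (0:ℝ)..s1, Gk (D.Γ k) (w s)) +
          (∑ k, D.rho k * ∫ s in s1..s2, Gk (D.Γ k) (w s)) := by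
        rw [← Finset.sum_add_distrib]
        apply Finset.sum_congr rfl
        intro k _
        rw [hsplit k]; ring
      rw [this]; ring
    linarith
  -- lower bound on increments given upper bound on w
  have hlow : ∀ V : ℝ, ∀ s1 s2 : ℝ, 0 ≤ s1 → s1 ≤ s2 → s2 ≤ T →
      (∀ s ∈ Set.Icc s1 s2, w s ≤ V) →
      SG D V * (s2 - s1) ≤ (w s2 + s2) - (w s1 + s1) := by
    intro V s1 s2 h1 h2 h3 hV
    rw [hdiff s1 s2 h1 h2 h3]
    have : ∀ k : Fin K, Gk (D.Γ k) V * (s2 - s1) ≤ ∫ s in s1..s2, Gk (D.Γ k) (w s) := by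
      intro k
      have hm := intervalIntegral.integral_mono_on h2
        (intervalIntegrable_const (c := Gk (D.Γ k) V))
        (hint' k s1 s2 h1 h3 h2)
        (fun s hs => Gk_anti_s12 (D.Γ k) (hV s hs))
      rw [intervalIntegral.integral_const] at hm
      calc Gk (D.Γ k) V * (s2 - s1) = (s2 - s1) • Gk (D.Γ k) V := by
            rw [smul_eq_mul]; ring
        _ ≤ _ := hm
    calc SG D V * (s2 - s1) = ∑ k, D.rho k * (Gk (D.Γ k) V * (s2 - s1)) := by
          rw [SG, Finset.sum_mul]; apply Finset.sum_congr rfl; intro k _; ring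
      _ ≤ _ := Finset.sum_le_sum fun k _ =>
          mul_le_mul_of_nonneg_left (this k) (rho_pos D k).le
  -- upper bound on increments given lower bound on w
  have hup : ∀ V : ℝ, ∀ s1 s2 : ℝ, 0 ≤ s1 → s1 ≤ s2 → s2 ≤ T →
      (∀ s ∈ Set.Icc s1 s2, V ≤ w s) →
      w s2 - w s1 ≤ (SG D V - 1) * (s2 - s1) := by
    intro V s1 s2 h1 h2 h3 hV
    have hd := hdiff s1 s2 h1 h2 h3
    have : ∀ k : Fin K, (∫ s in s1..s2, Gk (D.Γ k) (w s)) ≤ Gk (D.Γ k) V * (s2 - s1) := by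
      intro k
      have hm := intervalIntegral.integral_mono_on h2
        (hint' k s1 s2 h1 h3 h2)
        (intervalIntegrable_const (c := Gk (D.Γ k) V))
        (fun s hs => Gk_anti_s12 (D.Γ k) (hV s hs))
      rw [intervalIntegral.integral_const] at hm
      calc (∫ s in s1..s2, Gk (D.Γ k) (w s)) ≤ (s2 - s1) • Gk (D.Γ k) V := hm
        _ = Gk (D.Γ k) V * (s2 - s1) := by rw [smul_eq_mul]; ring
    have hsum : (∑ k, D.rho k * ∫ s in s1..s2, Gk (D.Γ k) (w s)) ≤ SG D V * (s2 - s1) := by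
      calc (∑ k, D.rho k * ∫ s in s1..s2, Gk (D.Γ k) (w s)) ≤
            ∑ k, D.rho k * (Gk (D.Γ k) V * (s2 - s1)) :=
          Finset.sum_le_sum fun k _ =>
            mul_le_mul_of_nonneg_left (this k) (rho_pos D k).le
        _ = SG D V * (s2 - s1) := by
          rw [SG, Finset.sum_mul]; apply Finset.sum_congr rfl; intro k _; ring
    nlinarith [hd, hsum]
  -- continuity of w on [0, T]
  have hcont : ContinuousOn w (Set.Icc 0 T) := by
    have hF : ContinuousOn (fun t : ℝ =>
        w 0 + (∑ k, D.rho k * ∫ s in (0:ℝ)..t, Gk (D.Γ k) (w s)) - t) (Set.Icc 0 T) := by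
      apply ContinuousOn.sub
      · apply ContinuousOn.add continuousOn_const
        apply continuousOn_finset_sum
        intro k _
        apply ContinuousOn.mul continuousOn_const
        have hIO : IntegrableOn (fun s => Gk (D.Γ k) (w s)) (Set.uIcc 0 T) volume := by
          rw [Set.uIcc_of_le hT.le]
          exact (integrableOn_Icc_iff_integrableOn_Ioc).2 (hwint k T hT.le).1
        have := intervalIntegral.continuousOn_primitive_interval hIO
        rwa [Set.uIcc_of_le hT.le] at this
      · exact continuousOn_id
    exact ContinuousOn.congr hF (fun t ht => hweq t ht.1)
  -- barrier lemma
  have barrier : ∀ v₀ : ℝ, SG D v₀ < 1 → ∀ s1 : ℝ, 0 ≤ s1 → s1 ≤ T →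
      ∀ s0, s1 ≤ s0 → s0 ≤ T → w s0 ≤ max (w s1) v₀ := by
    intro v₀ hv₀ s1 hs1nn hs1T s0 hs10 hs0T
    by_contra hcon
    push_neg at hcon
    set V := max (w s1) v₀ with hV
    set Sset := {s | s ∈ Set.Icc s1 s0 ∧ w s ≤ V} with hSset
    have hclosed : IsClosed Sset := by
      have : Sset = Set.Icc s1 s0 ∩ w ⁻¹' (Set.Iic V) := rfl
      rw [this]
      exact ContinuousOn.preimage_isClosed_of_isClosed
        (hcont.mono (Set.Icc_subset_Icc hs1nn hs0T)) isClosed_Icc isClosed_Iic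
    have hne : Sset.Nonempty := ⟨s1, ⟨le_rfl, hs10⟩, le_max_left _ _⟩
    have hcompact : IsCompact Sset :=
      isCompact_Icc.of_isClosed_subset hclosed (fun s hs => hs.1)
    set sstar := sSup Sset with hsstar
    have hmem : sstar ∈ Sset := hcompact.sSup_mem hne
    have hstarlt : sstar < s0 := by
      rcases lt_or_eq_of_le hmem.1.2 with h | h
      · exact h
      · exact absurd hmem.2 (by rw [h]; exact not_le.2 hcon)
    have hgt : ∀ s, sstar < s → s ≤ s0 → V < w s := by
      intro s hs hs0'
      by_contra hle
      push_neg at hle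
      have hsmem : s ∈ Sset := ⟨⟨le_trans hmem.1.1 hs.le, hs0'⟩, hle⟩
      have := le_csSup hcompact.bddAbove hsmem
      exact absurd this (not_le.2 hs)
    have hstarIcc : sstar ∈ Set.Icc (0:ℝ) T :=
      ⟨le_trans hs1nn hmem.1.1, le_trans hmem.1.2 hs0T⟩
    have hwstar : V ≤ w sstar := by
      by_contra hlt
      push_neg at hlt
      have hcwa : ContinuousWithinAt w (Set.Icc 0 T) sstar := hcont sstar hstarIcc
      have hsub : Set.Ioc sstar s0 ⊆ Set.Icc 0 T := fun s hs =>
        ⟨le_trans hstarIcc.1 hs.1.le, le_trans hs.2 hs0T⟩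
      have hcwa' : ContinuousWithinAt w (Set.Ioc sstar s0) sstar := hcwa.mono hsub
      have hev : ∀ᶠ s in 𝓝[Set.Ioc sstar s0] sstar, w s < V :=
        hcwa'.eventually_lt_const hlt
      have hNeBot : (𝓝[Set.Ioc sstar s0] sstar).NeBot := by
        rw [nhdsWithin_Ioc_eq_nhdsGT hstarlt]
        infer_instance
      obtain ⟨s, hsw, hsmem⟩ := (hev.and eventually_mem_nhdsWithin).exists
      exact absurd hsw (not_lt.2 (hgt s hsmem.1 hsmem.2).le)
    have hlower : ∀ s ∈ Set.Icc sstar s0, v₀ ≤ w s := by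
      intro s hs
      rcases eq_or_lt_of_le hs.1 with h | h
      · rw [← h]; exact le_trans (le_max_right _ _) hwstar
      · exact le_trans (le_max_right _ _) (hgt s h hs.2).le
    have hub := hup v₀ sstar s0 hstarIcc.1 hstarlt.le hs0T hlower
    have : w s0 < w sstar := by nlinarith [hstarlt]
    have hws : w sstar = V := le_antisymm hmem.2 hwstar
    rw [hws] at this
    linarith
  -- main case analysis
  set bset := {v : ℝ | 1 ≤ SG D v} with hbset
  have h0mem : (0:ℝ) ∈ bset := (SG_at_zero D).le
  have hbne : bset.Nonempty := ⟨0, h0mem⟩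
  -- reduce to: find Vb with positive SG and dominating w on [δ, T]
  suffices hsuff : ∃ Vb : ℝ, 0 < SG D Vb ∧ ∀ s ∈ Set.Icc δ T, w s ≤ Vb by
    obtain ⟨Vb, hVb1, hVb2⟩ := hsuff
    refine ⟨SG D Vb, hVb1, ?_⟩
    intro s1 s2 h1 h2 h3
    rw [mul_comm]
    exact mul_comm (s2-s1) (SG D Vb) ▸ hlow Vb s1 s2 (le_trans hδ.le h1) h2 h3
      (fun s hs => hVb2 s ⟨le_trans h1 hs.1, le_trans hs.2 h3⟩)
  by_cases hbdd : BddAbove bset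
  · set b := sSup bset with hb
    have hb1 : 1 ≤ SG D b := SG_le_of_sSup D hbdd
    have hwleb : ∀ s ∈ Set.Icc (0:ℝ) T, w s ≤ max (w 0) b := by
      intro s hs
      have key : ∀ η : ℝ, 0 < η → w s ≤ max (w 0) b + η := by
        intro η hη
        have hnotmem : b + η ∉ bset := fun hmem => by
          have := le_csSup hbdd hmem
          linarith
        have hSGlt : SG D (b + η) < 1 := not_le.1 hnotmem
        have hbar := barrier (b + η) hSGlt 0 le_rfl hT.le s hs.1 hs.2
        have hmax : max (w 0) (b + η) ≤ max (w 0) b + η := by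
          apply max_le
          · have := le_max_left (w 0) b; linarith
          · have := le_max_right (w 0) b; linarith
        linarith
      by_contra hc
      push_neg at hc
      have := key ((w s - max (w 0) b)/2) (by linarith)
      linarith
    by_cases hA1 : w 0 ≤ b
    · refine ⟨b, by linarith, ?_⟩
      intro s hs
      have := hwleb s ⟨le_trans hδ.le hs.1, hs.2⟩
      rwa [max_eq_right hA1] at this
    · push_neg at hA1
      -- w 0 > b : find s1 ∈ [0, δ] with w s1 < w 0
      have hs1ex : ∃ s1 ∈ Set.Icc (0:ℝ) δ, w s1 < w 0 := by
        by_contra hcc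
        push_neg at hcc
        have hconst : ∀ s ∈ Set.Icc (0:ℝ) δ, w s = w 0 := by
          intro s hs
          refine le_antisymm ?_ (hcc s hs)
          have := hwleb s ⟨hs.1, le_trans hs.2 hδT⟩
          rwa [max_eq_left hA1.le] at this
        have hd0 := hdiff 0 δ le_rfl hδ.le hδT
        have hInt : ∀ k : Fin K, (∫ s in (0:ℝ)..δ, Gk (D.Γ k) (w s)) = δ * Gk (D.Γ k) (w 0) := by
          intro k
          have : (∫ s in (0:ℝ)..δ, Gk (D.Γ k) (w s)) = ∫ s in (0:ℝ)..δ, Gk (D.Γ k) (w 0) := by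
            apply intervalIntegral.integral_congr
            intro s hs
            rw [Set.uIcc_of_le hδ.le] at hs
            show Gk (D.Γ k) (w s) = Gk (D.Γ k) (w 0)
            rw [hconst s hs]
          rw [this, intervalIntegral.integral_const, smul_eq_mul]
          ring
        have hsum : (∑ k, D.rho k * ∫ s in (0:ℝ)..δ, Gk (D.Γ k) (w s)) = δ * SG D (w 0) := by
          rw [SG, Finset.mul_sum]
          apply Finset.sum_congr rfl
          intro k _
          rw [hInt k]; ring
        rw [hsum, hconst δ ⟨hδ.le, le_rfl⟩] at hd0
        have hSG1 : SG D (w 0) = 1 := by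
          have h' : δ * SG D (w 0) = δ * 1 := by linarith
          have := mul_left_cancel₀ (ne_of_gt hδ) h'
          linarith
        have : w 0 ∈ bset := hSG1.ge
        exact absurd (le_csSup hbdd this) (not_le.2 hA1)
      obtain ⟨s1, hs1I, hs1w⟩ := hs1ex
      set m := (b + w 0)/2 with hm
      have hmb : b < m := by rw [hm]; linarith
      have hmw : m < w 0 := by rw [hm]; linarith
      set v₀ := max (w s1) m with hv₀
      have hv₀lt : SG D v₀ < 1 := by
        have : v₀ ∉ bset := fun hmem => by
          have := le_csSup hbdd hmem
          have : v₀ ≤ b := this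
          have : m ≤ b := le_trans (le_max_right _ _) this
          linarith
        exact not_le.1 this
      have hv₀w : v₀ < w 0 := max_lt hs1w hmw
      set v' := (v₀ + w 0)/2 with hv'
      have hv'1 : v₀ < v' := by rw [hv']; linarith
      have hv'2 : v' < w 0 := by rw [hv']; linarith
      refine ⟨v', hpos v' hv'2, ?_⟩
      intro s hs
      have hbar := barrier v₀ hv₀lt s1 hs1I.1 (le_trans hs1I.2 hδT) s
        (le_trans hs1I.2 hs.1) hs.2
      rw [max_eq_right (le_max_left _ _)] at hbar
      exact le_trans hbar hv'1.le
  · -- bset unbounded above: SG ≥ 1 everywhere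
    have hall : ∀ v : ℝ, 1 ≤ SG D v := by
      intro v
      obtain ⟨v', hv'mem, hv'gt⟩ := not_bddAbove_iff.1 hbdd v
      exact le_trans hv'mem (SG_anti D hv'gt.le)
    obtain ⟨x, hxI, hxmax⟩ := isCompact_Icc.exists_isMaxOn (Set.nonempty_Icc.2 hδT)
      (hcont.mono (Set.Icc_subset_Icc hδ.le le_rfl))
    refine ⟨w x, lt_of_lt_of_le one_pos (hall (w x)), ?_⟩
    exact fun s hs => hxmax hs

end C0

section MainAux

lemma strip_fst (z1 κ : ℝ) :
    {y : ℝ × ℝ | |y.1 - z1| < κ} = Prod.fst ⁻¹' (Set.Ioo (z1 - κ) (z1 + κ)) := by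
  ext y
  simp only [Set.mem_setOf_eq, Set.mem_preimage, Set.mem_Ioo, abs_lt]
  constructor <;> (rintro ⟨h1, h2⟩; exact ⟨by linarith, by linarith⟩)

lemma strip_snd (z2 κ : ℝ) :
    {y : ℝ × ℝ | |y.2 - z2| < κ} = Prod.snd ⁻¹' (Set.Ioo (z2 - κ) (z2 + κ)) := by
  ext y
  simp only [Set.mem_setOf_eq, Set.mem_preimage, Set.mem_Ioo, abs_lt]
  constructor <;> (rintro ⟨h1, h2⟩; exact ⟨by linarith, by linarith⟩)

lemma strip_fst_prod (z1 κ : ℝ) :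
    {y : ℝ × ℝ | |y.1 - z1| < κ} = (Set.Ioo (z1 - κ) (z1 + κ)) ×ˢ (Set.univ : Set ℝ) := by
  rw [strip_fst]; ext y; simp [Set.mem_prod]

lemma strip_snd_prod (z2 κ : ℝ) :
    {y : ℝ × ℝ | |y.2 - z2| < κ} = (Set.univ : Set ℝ) ×ˢ (Set.Ioo (z2 - κ) (z2 + κ)) := by
  rw [strip_snd]; ext y; simp [Set.mem_prod]

lemma deltaPlus_univ_le (wv : ℝ) : deltaPlus wv Set.univ ≤ 1 := by
  unfold deltaPlus
  split_ifs
  · simp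
  · simp

end MainAux

set_option maxHeartbeats 1600000 in
lemma fluid_corner_enlargement_small_aux {K : ℕ} (D : Data K)
    (ϑ : Fin K → MeasureTheory.Measure (ℝ × ℝ)) (hϑ : MemI D ϑ)
    (ζ : ℝ → Fin K → MeasureTheory.Measure (ℝ × ℝ)) (hζ : IsFluidSol D ϑ ζ)
    (T : ℝ) (hT : 0 < T) (ε : ℝ) (hε : 0 < ε) : ∃ κ : ℝ, 0 < κ ∧
      ∀ k, ∀ t ∈ Set.Icc (0:ℝ) T, ∀ x ∈ Q,
        ζ t k (enlarge (shift Cset x) κ) < ENNReal.ofReal ε := by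
  obtain ⟨w, hw, hw0, hfin, hinit, hform⟩ := hζ
  obtain ⟨hϑfin, hϑQc, hϑC, hϑbdd, hϑG⟩ := hϑ
  -- positivity of SG below the initial workload
  have hpos : ∀ v : ℝ, v < w 0 → 0 < SG D v := by
    intro v hv
    rw [hw0] at hv
    obtain ⟨k, hk⟩ := hϑG (wMeas ϑ - v) (by linarith)
    have hkv : 0 < Gk (D.Γ k) v := by
      have : wMeas ϑ - (wMeas ϑ - v) = v := by ring
      rwa [this] at hk
    apply Finset.sum_pos' (fun j _ => mul_nonneg (rho_pos D j).le (Gk_nonneg_s12 _ _))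
    exact ⟨k, Finset.mem_univ k, mul_pos (rho_pos D k) hkv⟩
  -- the superposition measure and its marginals
  set Θ : Measure (ℝ × ℝ) := ∑ k, ϑ k with hΘ
  have hΘapp : ∀ s : Set (ℝ × ℝ), Θ s = ∑ k, ϑ k s := by
    intro s
    rw [hΘ, Measure.coe_finset_sum]
    simp
  haveI hΘfin : IsFiniteMeasure Θ := by
    constructor
    rw [hΘapp]
    exact ENNReal.sum_lt_top.2 fun k _ => (haveI := hϑfin k; measure_lt_top (ϑ k) _)
  have hϑleΘ : ∀ k : Fin K, ∀ s : Set (ℝ × ℝ), ϑ k s ≤ Θ s := by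
    intro k s
    rw [hΘapp]
    exact Finset.single_le_sum (f := fun j => ϑ j s) (fun j _ => zero_le) (Finset.mem_univ k)
  have hΘQc : Θ Qᶜ = 0 := by
    rw [hΘapp]
    exact Finset.sum_eq_zero fun k _ => hϑQc k
  have hΘline1 : ∀ a : ℝ, Θ (Prod.fst ⁻¹' {a}) = 0 := by
    intro a
    rcases le_or_gt 0 a with ha | ha
    · have hsub : Prod.fst ⁻¹' {a} ⊆ shift Cset (a, 0) ∪ Qᶜ := by
        intro y hy
        simp only [Set.mem_preimage, Set.mem_singleton_iff] at hy
        by_cases hyQ : y ∈ Q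
        · exact Or.inl ⟨hyQ, Or.inr ⟨by simp [hy], by simpa [hy] using hyQ.2⟩⟩
        · exact Or.inr hyQ
      refine le_antisymm (le_trans (measure_mono hsub)
        (le_trans (measure_union_le _ _) ?_)) zero_le
      have h1 : Θ (shift Cset (a, 0)) = 0 := by
        rw [hΘapp]; exact hϑC (a, 0) ⟨ha, le_rfl⟩
      rw [h1, hΘQc]; simp
    · have hsub : Prod.fst ⁻¹' {a} ⊆ Qᶜ := by
        intro y hy
        simp only [Set.mem_preimage, Set.mem_singleton_iff] at hy
        intro hyQ
        have h1 := hyQ.1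
        rw [hy] at h1
        exact absurd h1 (not_le.2 ha)
      exact le_antisymm (le_trans (measure_mono hsub) hΘQc.le) zero_le
  have hΘline2 : ∀ a : ℝ, Θ (Prod.snd ⁻¹' {a}) = 0 := by
    intro a
    rcases le_or_gt 0 a with ha | ha
    · have hsub : Prod.snd ⁻¹' {a} ⊆ shift Cset (0, a) ∪ Qᶜ := by
        intro y hy
        simp only [Set.mem_preimage, Set.mem_singleton_iff] at hy
        by_cases hyQ : y ∈ Q
        · exact Or.inl ⟨hyQ, Or.inl ⟨by simpa [hy] using hyQ.1, by simp [hy]⟩⟩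
        · exact Or.inr hyQ
      refine le_antisymm (le_trans (measure_mono hsub)
        (le_trans (measure_union_le _ _) ?_)) zero_le
      have h1 : Θ (shift Cset (0, a)) = 0 := by
        rw [hΘapp]; exact hϑC (0, a) ⟨le_rfl, ha⟩
      rw [h1, hΘQc]; simp
    · have hsub : Prod.snd ⁻¹' {a} ⊆ Qᶜ := by
        intro y hy
        simp only [Set.mem_preimage, Set.mem_singleton_iff] at hy
        intro hyQ
        have h1 := hyQ.2
        rw [hy] at h1
        exact absurd h1 (not_le.2 ha)
      exact le_antisymm (le_trans (measure_mono hsub) hΘQc.le) zero_le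
  set ν1 : Measure ℝ := Θ.map Prod.fst with hν1
  set ν2 : Measure ℝ := Θ.map Prod.snd with hν2
  haveI : IsFiniteMeasure ν1 := by rw [hν1]; infer_instance
  haveI : IsFiniteMeasure ν2 := by rw [hν2]; infer_instance
  have hν1atom : ∀ a : ℝ, ν1 {a} = 0 := by
    intro a
    rw [hν1, Measure.map_apply measurable_fst (measurableSet_singleton a)]
    exact hΘline1 a
  have hν2atom : ∀ a : ℝ, ν2 {a} = 0 := by
    intro a
    rw [hν2, Measure.map_apply measurable_snd (measurableSet_singleton a)]
    exact hΘline2 a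
  set νΓ : Measure ℝ := ∑ k, D.Γ k with hνΓ
  have hνΓapp : ∀ s : Set ℝ, νΓ s = ∑ k, D.Γ k s := by
    intro s
    rw [hνΓ, Measure.coe_finset_sum]
    simp
  haveI hνΓfin : IsFiniteMeasure νΓ := by
    constructor
    rw [hνΓapp]
    exact ENNReal.sum_lt_top.2 fun k _ => measure_lt_top _ _
  have hΓle : ∀ k : Fin K, ∀ s : Set ℝ, D.Γ k s ≤ νΓ s := by
    intro k s
    rw [hνΓapp]
    exact Finset.single_le_sum (f := fun j => D.Γ j s) (fun j _ => zero_le) (Finset.mem_univ k)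
  have hνΓatom : ∀ a : ℝ, νΓ {a} = 0 := by
    intro a
    rw [hνΓapp]
    exact Finset.sum_eq_zero fun k _ => D.Γ_noAtom k a
  -- constants
  set Λ : ℝ := 1 + ∑ k, D.lam k with hΛ
  have hΛpos : 0 < Λ := by
    rw [hΛ]
    have : 0 ≤ ∑ k, D.lam k := Finset.sum_nonneg fun k _ => (D.lam_pos k).le
    linarith
  have hlamle : ∀ k : Fin K, D.lam k ≤ Λ := by
    intro k
    rw [hΛ]
    have := Finset.single_le_sum (f := D.lam) (fun j _ => (D.lam_pos j).le) (Finset.mem_univ k)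
    linarith
  set ε' : ℝ := ε / (8 * Λ * (T + 1)) with hε'def
  have hε'pos : 0 < ε' := by rw [hε'def]; positivity
  set δ : ℝ := min T (ε / (8 * Λ)) with hδdef
  have hδpos : 0 < δ := lt_min hT (by positivity)
  have hδT : δ ≤ T := min_le_left _ _
  have hδε : δ ≤ ε / (8 * Λ) := min_le_right _ _
  obtain ⟨c0, hc0, hc0key⟩ := exists_c0 D w hw hpos hδpos hδT
  obtain ⟨κ1, hκ1p, hκ1⟩ := unif_small ν1 hν1atom (by positivity : (0:ℝ) < ε / 4)
  obtain ⟨κ2, hκ2p, hκ2⟩ := unif_small ν2 hν2atom (by positivity : (0:ℝ) < ε / 4)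
  obtain ⟨κ3, hκ3p, hκ3⟩ := unif_small νΓ hνΓatom hε'pos
  set κ : ℝ := min (min κ1 κ2) (min κ3 (c0 * ε / (32 * Λ))) with hκdef
  have hκpos : 0 < κ := lt_min (lt_min hκ1p hκ2p) (lt_min hκ3p (by positivity))
  have hκκ1 : κ ≤ κ1 := le_trans (min_le_left _ _) (min_le_left _ _)
  have hκκ2 : κ ≤ κ2 := le_trans (min_le_left _ _) (min_le_right _ _)
  have hκκ3 : κ ≤ κ3 := le_trans (min_le_right _ _) (min_le_left _ _)
  have hκc0 : κ ≤ c0 * ε / (32 * Λ) := le_trans (min_le_right _ _) (min_le_right _ _)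
  refine ⟨κ, hκpos, ?_⟩
  intro k t ht x hx
  set B : Set (ℝ × ℝ) := enlarge (shift Cset x) κ with hB
  have hBQ : B ⊆ Q := fun y hy => hy.1
  have hBmeas : MeasurableSet B := measurableSet_enlarge _ _
  obtain ⟨hkint, hkval⟩ := hform k B hBQ hBmeas t ht.1
  -- bound on the initial-measure term
  have hb1 : ϑ k (shiftd B t) ≤ ENNReal.ofReal (ε / 4) + ENNReal.ofReal (ε / 4) := by
    set z : ℝ × ℝ := (x.1 + t, x.2 + t) with hz
    have hsub1 : shiftd B t ⊆ {y : ℝ × ℝ | |y.1 - z.1| < κ} ∪ {y : ℝ × ℝ | |y.2 - z.2| < κ} :=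
      fun y hy => enlarge_shift_subset z κ (shiftd_enlarge_subset x hx κ ht.1 hy)
    refine le_trans (measure_mono hsub1) (le_trans (measure_union_le _ _) (add_le_add ?_ ?_))
    · calc ϑ k {y : ℝ × ℝ | |y.1 - z.1| < κ} ≤ Θ {y : ℝ × ℝ | |y.1 - z.1| < κ} := hϑleΘ k _
        _ = ν1 (Set.Ioo (z.1 - κ) (z.1 + κ)) := by
            rw [hν1, Measure.map_apply measurable_fst measurableSet_Ioo, strip_fst]
        _ ≤ ν1 (Set.Ioo (z.1 - κ1) (z.1 + κ1)) :=
            measure_mono (Set.Ioo_subset_Ioo (by linarith) (by linarith))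
        _ ≤ ENNReal.ofReal (ε / 4) := (hκ1 z.1).le
    · calc ϑ k {y : ℝ × ℝ | |y.2 - z.2| < κ} ≤ Θ {y : ℝ × ℝ | |y.2 - z.2| < κ} := hϑleΘ k _
        _ = ν2 (Set.Ioo (z.2 - κ) (z.2 + κ)) := by
            rw [hν2, Measure.map_apply measurable_snd measurableSet_Ioo, strip_snd]
        _ ≤ ν2 (Set.Ioo (z.2 - κ2) (z.2 + κ2)) :=
            measure_mono (Set.Ioo_subset_Ioo (by linarith) (by linarith))
        _ ≤ ENNReal.ofReal (ε / 4) := (hκ2 z.2).le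
  -- bound on the kernel term
  set c : ℝ := x.1 + t with hc
  set E : Set ℝ := {s : ℝ | s ∈ Set.Icc δ T ∧ |w s + s - c| < κ} with hE
  obtain ⟨Jset, hJmeas, hJsub, hJvol⟩ : ∃ J : Set ℝ, MeasurableSet J ∧ E ⊆ J ∧
      volume J ≤ ENNReal.ofReal (4 * κ / c0) := by
    by_cases hEne : E.Nonempty
    · obtain ⟨e₀, he₀⟩ := hEne
      have key : ∀ u v : ℝ, u ∈ E → v ∈ E → u ≤ v → v - u ≤ 2 * κ / c0 := by
        intro u v hu hv huv
        have h0 := hc0key u v hu.1.1 huv hv.1.2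
        have h1 := abs_lt.1 hu.2
        have h2 := abs_lt.1 hv.2
        rw [le_div_iff₀ hc0]
        nlinarith
      refine ⟨Set.Icc (e₀ - 2 * κ / c0) (e₀ + 2 * κ / c0), measurableSet_Icc, ?_, ?_⟩
      · intro s hs
        rcases le_total s e₀ with h | h
        · have := key s e₀ hs he₀ h
          exact ⟨by linarith, by linarith [div_nonneg (by linarith [hκpos.le] : (0:ℝ) ≤ 2 * κ) hc0.le]⟩
        · have := key e₀ s he₀ hs h
          exact ⟨by linarith [div_nonneg (by linarith [hκpos.le] : (0:ℝ) ≤ 2 * κ) hc0.le], by linarith⟩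
      · rw [Real.volume_Icc]
        apply ENNReal.ofReal_le_ofReal
        have : e₀ + 2 * κ / c0 - (e₀ - 2 * κ / c0) = 4 * κ / c0 := by ring
        rw [this]
    · exact ⟨∅, MeasurableSet.empty, fun s hs => absurd ⟨s, hs⟩ hEne, by simp⟩
  set g : ℝ → ℝ := fun s => ε' + (Set.Icc 0 δ ∪ Jset).indicator (fun _ => (1:ℝ)) s with hg
  have hindmeas : MeasurableSet (Set.Icc (0:ℝ) δ ∪ Jset) := measurableSet_Icc.union hJmeas
  have hindint : IntervalIntegrable ((Set.Icc (0:ℝ) δ ∪ Jset).indicator (fun _ => (1:ℝ)))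
      volume 0 t := by
    rw [intervalIntegrable_iff_integrableOn_Ioc_of_le ht.1]
    refine Integrable.indicator ?_ hindmeas
    refine integrableOn_const ?_
    rw [Real.volume_Ioc]
    exact ENNReal.ofReal_ne_top
  have hgint : IntervalIntegrable g volume 0 t := by
    rw [hg]
    exact (intervalIntegrable_const (c := ε')).add hindint
  have hpt : ∀ s ∈ Set.Icc (0:ℝ) t, kern (D.Γ k) (w s) (shiftd B (t - s)) ≤ g s := by
    intro s hs
    set zs : ℝ × ℝ := (x.1 + (t - s), x.2 + (t - s)) with hzs
    have hts : 0 ≤ t - s := by linarith [hs.2]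
    have hsub : shiftd B (t - s) ⊆
        {y : ℝ × ℝ | |y.1 - zs.1| < κ} ∪ {y : ℝ × ℝ | |y.2 - zs.2| < κ} :=
      fun y hy => enlarge_shift_subset zs κ (shiftd_enlarge_subset x hx κ hts hy)
    have hindnn : (0:ℝ) ≤ (Set.Icc 0 δ ∪ Jset).indicator (fun _ => (1:ℝ)) s :=
      Set.indicator_nonneg (fun _ _ => zero_le_one) s
    by_cases hcase : |w s + s - c| < κ
    · -- the Dirac part can be large, but such times are rare
      have hsJ : s ∈ Set.Icc 0 δ ∪ Jset := by
        rcases le_or_gt s δ with h | h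
        · exact Or.inl ⟨hs.1, h⟩
        · exact Or.inr (hJsub ⟨⟨h.le, le_trans hs.2 ht.2⟩, hcase⟩)
      have hgval : g s = ε' + 1 := by
        rw [hg]; simp [Set.indicator_of_mem hsJ]
      rw [hgval]
      have hm1 : ((deltaPlus (w s)).prod (D.Γ k)) (shiftd B (t - s)) ≤ 1 := by
        refine le_trans (measure_mono (Set.subset_univ _)) ?_
        rw [← Set.univ_prod_univ, Measure.prod_prod,
          (measure_univ : D.Γ k Set.univ = 1), mul_one]
        exact deltaPlus_univ_le _
      refine ENNReal.toReal_le_of_le_ofReal (by linarith) ?_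
      refine le_trans hm1 ?_
      rw [← ENNReal.ofReal_one]
      exact ENNReal.ofReal_le_ofReal (by linarith)
    · -- away from the diagonal window, only the Γ part contributes
      have hws : ¬ |w s - zs.1| < κ := by
        have : w s - zs.1 = w s + s - c := by rw [hzs, hc]; simp; ring
        rwa [this]
      have hδ0 : deltaPlus (w s) (Set.Ioo (zs.1 - κ) (zs.1 + κ)) = 0 := by
        unfold deltaPlus
        split_ifs with hwspos
        · rw [Measure.dirac_apply' _ measurableSet_Ioo]
          have hnot : w s ∉ Set.Ioo (zs.1 - κ) (zs.1 + κ) := by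
            intro hmem
            exact hws (abs_lt.2 ⟨by linarith [hmem.1], by linarith [hmem.2]⟩)
          simp [Set.indicator_of_notMem hnot]
        · simp
      have hmle : ((deltaPlus (w s)).prod (D.Γ k)) (shiftd B (t - s)) ≤
          ENNReal.ofReal ε' := by
        refine le_trans (measure_mono hsub) (le_trans (measure_union_le _ _) ?_)
        have hA : ((deltaPlus (w s)).prod (D.Γ k)) {y : ℝ × ℝ | |y.1 - zs.1| < κ} = 0 := by
          rw [strip_fst_prod, Measure.prod_prod, measure_univ, mul_one, hδ0]
        have hBb : ((deltaPlus (w s)).prod (D.Γ k)) {y : ℝ × ℝ | |y.2 - zs.2| < κ} ≤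
            ENNReal.ofReal ε' := by
          rw [strip_snd_prod, Measure.prod_prod]
          calc deltaPlus (w s) Set.univ * D.Γ k (Set.Ioo (zs.2 - κ) (zs.2 + κ)) ≤
              1 * D.Γ k (Set.Ioo (zs.2 - κ) (zs.2 + κ)) :=
                mul_le_mul' (deltaPlus_univ_le _) le_rfl
            _ = D.Γ k (Set.Ioo (zs.2 - κ) (zs.2 + κ)) := one_mul _
            _ ≤ νΓ (Set.Ioo (zs.2 - κ) (zs.2 + κ)) := hΓle k _
            _ ≤ νΓ (Set.Ioo (zs.2 - κ3) (zs.2 + κ3)) :=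
                measure_mono (Set.Ioo_subset_Ioo (by linarith) (by linarith))
            _ ≤ ENNReal.ofReal ε' := (hκ3 zs.2).le
        rw [hA, zero_add]
        exact hBb
      have : kern (D.Γ k) (w s) (shiftd B (t - s)) ≤ ε' :=
        ENNReal.toReal_le_of_le_ofReal hε'pos.le hmle
      rw [hg]
      simp only []
      linarith
  -- integral bound
  have hint_le : (∫ s in (0:ℝ)..t, kern (D.Γ k) (w s) (shiftd B (t - s))) ≤
      ε' * T + (δ + 4 * κ / c0) := by
    have h1 := intervalIntegral.integral_mono_on ht.1 hkint hgint hpt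
    have h2 : (∫ s in (0:ℝ)..t, g s) = ε' * t +
        ∫ s in (0:ℝ)..t, (Set.Icc 0 δ ∪ Jset).indicator (fun _ => (1:ℝ)) s := by
      rw [hg]
      rw [intervalIntegral.integral_add (intervalIntegrable_const (c := ε')) hindint]
      rw [intervalIntegral.integral_const, smul_eq_mul, sub_zero, mul_comm]
    have h3 : (∫ s in (0:ℝ)..t, (Set.Icc 0 δ ∪ Jset).indicator (fun _ => (1:ℝ)) s) ≤
        δ + 4 * κ / c0 := by
      rw [intervalIntegral.integral_of_le ht.1, setIntegral_indicator hindmeas]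
      simp only [setIntegral_const, smul_eq_mul, mul_one]
      apply ENNReal.toReal_le_of_le_ofReal
        (by positivity)
      refine le_trans (measure_mono Set.inter_subset_right) ?_
      refine le_trans (measure_union_le _ _) ?_
      rw [Real.volume_Icc, sub_zero]
      refine le_trans (add_le_add le_rfl hJvol) ?_
      rw [← ENNReal.ofReal_add hδpos.le (by positivity)]
    have h4 : ε' * t ≤ ε' * T := mul_le_mul_of_nonneg_left ht.2 hε'pos.le
    linarith
  have hintnn : 0 ≤ ∫ s in (0:ℝ)..t, kern (D.Γ k) (w s) (shiftd B (t - s)) :=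
    intervalIntegral.integral_nonneg ht.1 (fun s _ => ENNReal.toReal_nonneg)
  have hb2 : D.lam k * (∫ s in (0:ℝ)..t, kern (D.Γ k) (w s) (shiftd B (t - s))) ≤
      3 * ε / 8 := by
    have h1 : D.lam k * (∫ s in (0:ℝ)..t, kern (D.Γ k) (w s) (shiftd B (t - s))) ≤
        Λ * (ε' * T + (δ + 4 * κ / c0)) :=
      mul_le_mul (hlamle k) hint_le hintnn hΛpos.le
    refine le_trans h1 ?_
    have hT1 : (0:ℝ) < T + 1 := by linarith
    have e1 : Λ * (ε' * T) ≤ ε / 8 := by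
      rw [hε'def]
      have heq : Λ * (ε / (8 * Λ * (T + 1)) * T) = ε * T / (8 * (T + 1)) := by
        field_simp
      rw [heq, div_le_div_iff₀ (by positivity) (by norm_num)]
      nlinarith
    have e2 : Λ * δ ≤ ε / 8 := by
      have : Λ * δ ≤ Λ * (ε / (8 * Λ)) := mul_le_mul_of_nonneg_left hδε hΛpos.le
      refine le_trans this ?_
      rw [mul_div_assoc']
      rw [div_le_div_iff₀ (by positivity) (by norm_num)]
      nlinarith
    have e3 : Λ * (4 * κ / c0) ≤ ε / 8 := by
      have hκ' : 4 * κ / c0 ≤ ε / (8 * Λ) := by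
        rw [div_le_div_iff₀ hc0 (by positivity)]
        have := hκc0
        rw [le_div_iff₀ (by positivity : (0:ℝ) < 32 * Λ)] at this
        nlinarith
      have : Λ * (4 * κ / c0) ≤ Λ * (ε / (8 * Λ)) := mul_le_mul_of_nonneg_left hκ' hΛpos.le
      refine le_trans this ?_
      rw [mul_div_assoc']
      rw [div_le_div_iff₀ (by positivity) (by norm_num)]
      nlinarith
    nlinarith
  -- conclusion
  calc ζ t k B = ϑ k (shiftd B t) +
      ENNReal.ofReal (D.lam k * ∫ s in (0:ℝ)..t, kern (D.Γ k) (w s) (shiftd B (t - s))) := hkval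
    _ ≤ (ENNReal.ofReal (ε / 4) + ENNReal.ofReal (ε / 4)) + ENNReal.ofReal (3 * ε / 8) :=
        add_le_add hb1 (ENNReal.ofReal_le_ofReal hb2)
    _ = ENNReal.ofReal (ε / 4 + ε / 4 + 3 * ε / 8) := by
        rw [← ENNReal.ofReal_add (by positivity) (by positivity),
          ← ENNReal.ofReal_add (by positivity) (by positivity)]
    _ < ENNReal.ofReal ε := (ENNReal.ofReal_lt_ofReal_iff hε).2 (by linarith)

/-- For `ϑ ∈ I` and the fluid model solution `ζ` with initial measure `ϑ`,
for every `T > 0` and `ε > 0` there exists `κ > 0` such that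
`max_k sup_{t∈[0,T]} sup_{x∈[0,∞)²} ζ_k(t)(C_x^κ) < ε`. -/
theorem fluid_corner_enlargement_small {K : ℕ} (D : Data K)
    (ϑ : Fin K → MeasureTheory.Measure (ℝ × ℝ)) (hϑ : MemI D ϑ)
    (ζ : ℝ → Fin K → MeasureTheory.Measure (ℝ × ℝ)) (hζ : IsFluidSol D ϑ ζ) :
    ∀ T : ℝ, 0 < T → ∀ ε : ℝ, 0 < ε → ∃ κ : ℝ, 0 < κ ∧
      ∀ k, ∀ t ∈ Set.Icc (0:ℝ) T, ∀ x ∈ Q,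
        ζ t k (enlarge (shift Cset x) κ) < ENNReal.ofReal ε :=
  fun T hT ε hε => fluid_corner_enlargement_small_aux D ϑ hϑ ζ hζ T hT ε hε


end OverloadedFIFO
end
end
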